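/- arXiv:1205.2858 — 2 statements merged into one kernel-verified Lean document; each statement's English description precedes it below -/
import Mathlib

section
/- Let (Λ_n)_{n≥0} be row-finite k-graphs with no sources and let p_n : Λ_n → Λ_{n−1} (n ≥ 1) be finite-to-one coverings. Then there is a homeomorphism π̃_∞ from the topological realization X_{lim←(Λ_n,p_n)} of the projective-limit topological k-graph onto the projective limit lim←(X_{Λ_n}, p̃_n) of the topological realizations along the induced covering maps p̃_n, satisfying π̃_∞([(λ_i)_{i≥0}, t]) = ([λ_i, t])_{i≥0}. -/
/-- A `k`-graph: a countable small category (objects identified with the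
identity morphisms, i.e. the morphisms of degree `0`) equipped with a degree
functor `d : Λ → ℕᵏ` satisfying the unique factorization property. -/
structure KGraph (k : ℕ) where
  /-- The morphisms of the category. -/
  Mor : Type
  /-- The category is countable. -/
  countable : Countable Mor
  /-- The source (domain) of a morphism, viewed as a degree-zero morphism. -/
  src : Mor → Mor
  /-- The range (codomain) of a morphism, viewed as a degree-zero morphism. -/
  rng : Mor → Mor
  /-- Composition `comp a b = a ∘ b`, meaningful when `src a = rng b`. -/
  comp : Mor → Mor → Mor
  /-- The degree functor. -/
  deg : Mor → Fin k → ℕ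
  src_src : ∀ a, src (src a) = src a
  rng_src : ∀ a, rng (src a) = src a
  src_rng : ∀ a, src (rng a) = rng a
  rng_rng : ∀ a, rng (rng a) = rng a
  deg_src : ∀ a, deg (src a) = 0
  deg_rng : ∀ a, deg (rng a) = 0
  src_comp : ∀ a b, src a = rng b → src (comp a b) = src b
  rng_comp : ∀ a b, src a = rng b → rng (comp a b) = rng a
  comp_assoc : ∀ a b c, src a = rng b → src b = rng c →
    comp (comp a b) c = comp a (comp b c)
  id_comp : ∀ a, comp (rng a) a = a
  comp_id : ∀ a, comp a (src a) = a
  deg_comp : ∀ a b, src a = rng b → deg (comp a b) = deg a + deg b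
  /-- The unique factorization property. -/
  factor : ∀ (a : Mor) (m n : Fin k → ℕ), deg a = m + n →
    ∃! p : Mor × Mor, deg p.1 = m ∧ deg p.2 = n ∧ src p.1 = rng p.2 ∧
      comp p.1 p.2 = a

namespace KGraph

variable {k : ℕ} (Λ : KGraph k)

/-- The segment `a(m,n)` of a morphism `a`, i.e. the (unique) middle factor of
`a = a(0,m) a(m,n) a(n, d(a))`; junk value `a` if no such factorization exists. -/
noncomputable def seg (a : Λ.Mor) (m n : Fin k → ℕ) : Λ.Mor :=
  letI := Classical.propDecidable
  if h : ∃ b : Λ.Mor, Λ.deg b = n - m ∧ ∃ x y : Λ.Mor,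
      Λ.deg x = m ∧ Λ.src x = Λ.rng b ∧ Λ.src b = Λ.rng y ∧
      a = Λ.comp x (Λ.comp b y)
  then h.choose else a

/-- The points `⨆_{λ ∈ Λ} {λ} × [0, d(λ)]` of which the topological
realization is a quotient; topologized as a disjoint union of subspaces of `ℝᵏ`. -/
def Points : Type :=
  Σ a : Λ.Mor, { t : Fin k → ℝ // ∀ i, 0 ≤ t i ∧ t i ≤ (Λ.deg a i : ℝ) }

instance : TopologicalSpace Λ.Points :=
  inferInstanceAs (TopologicalSpace
    (Σ a : Λ.Mor, { t : Fin k → ℝ // ∀ i, 0 ≤ t i ∧ t i ≤ (Λ.deg a i : ℝ) }))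

/-- Coordinatewise floor `⌊t⌋` (as a vector of naturals; this is the honest
floor on the relevant region `t ≥ 0`). -/
noncomputable def fl (t : Fin k → ℝ) : Fin k → ℕ := fun i => (⌊t i⌋).toNat

/-- Coordinatewise ceiling `⌈t⌉`. -/
noncomputable def ce (t : Fin k → ℝ) : Fin k → ℕ := fun i => (⌈t i⌉).toNat

/-- The fractional part `t - ⌊t⌋`. -/
noncomputable def frac (t : Fin k → ℝ) : Fin k → ℝ := fun i => t i - ((⌊t i⌋).toNat : ℝ)

/-- The relation `(μ,s) ∼ (ν,t) ⟺ μ(⌊s⌋,⌈s⌉) = ν(⌊t⌋,⌈t⌉)` and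
`s - ⌊s⌋ = t - ⌊t⌋` defining the topological realization. -/
def ptRel : Λ.Points → Λ.Points → Prop := fun p q =>
  Λ.seg p.1 (fl p.2.1) (ce p.2.1) = Λ.seg q.1 (fl q.2.1) (ce q.2.1) ∧
    frac p.2.1 = frac q.2.1

/-- `ptRel` is an equivalence relation. -/
def ptSetoid : Setoid Λ.Points where
  r := Λ.ptRel
  iseqv := ⟨fun _ => ⟨rfl, rfl⟩, fun h => ⟨h.1.symm, h.2.symm⟩,
    fun h h' => ⟨h.1.trans h'.1, h.2.trans h'.2⟩⟩

/-- The topological realization `X_Λ` of the `k`-graph `Λ`. -/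
def Real : Type := Quotient Λ.ptSetoid

instance : TopologicalSpace Λ.Real :=
  inferInstanceAs (TopologicalSpace (Quotient Λ.ptSetoid))

/-- The class `[λ, t] ∈ X_Λ` of a pair `(λ, t)` with `0 ≤ t ≤ d(λ)`. -/
def pt (a : Λ.Mor) (t : Fin k → ℝ) (h : ∀ i, 0 ≤ t i ∧ t i ≤ (Λ.deg a i : ℝ)) :
    Λ.Real :=
  Quotient.mk Λ.ptSetoid ⟨a, ⟨t, h⟩⟩

/-- The open cube `Q_λ = {[λ,t] : t ∈ (0, d(λ))}` of a morphism `λ` (of degree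
`≤ (1,…,1)`). -/
def Qcube (lam : Λ.Mor) : Set Λ.Real :=
  { x | ∃ (t : Fin k → ℝ) (h : ∀ i, 0 ≤ t i ∧ t i ≤ (Λ.deg lam i : ℝ)),
      (∀ i, Λ.deg lam i = 1 → 0 < t i ∧ t i < 1) ∧ x = Λ.pt lam t h }

/-- The `r`-skeleton `X_Λ^r` of the topological realization. -/
def skel' (G : KGraph k) : ℕ → Set G.Real
  | 0 => ⋃ v ∈ { v : G.Mor | G.deg v = 0 }, G.Qcube v
  | (r+1) => skel' G r ∪
      ⋃ lam ∈ { lam : G.Mor | G.deg lam ≤ 1 ∧ ∑ i, G.deg lam i = r + 1 },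
        G.Qcube lam

/-- The `r`-skeleton (wrapper). -/
def skel (r : ℕ) : Set Λ.Real := skel' Λ r

/-- A `k`-graph is connected if any two vertices are joined by an undirected
path of morphisms. -/
def Connected : Prop :=
  ∀ u v : Λ.Mor, Λ.deg u = 0 → Λ.deg v = 0 →
    Relation.ReflTransGen (fun x y => ∃ e : Λ.Mor,
      (Λ.src e = x ∧ Λ.rng e = y) ∨ (Λ.src e = y ∧ Λ.rng e = x)) u v

end KGraph

/-- A morphism of `k`-graphs: a degree-preserving functor. -/
@[ext]
structure KGraphHom {k : ℕ} (Λ Γ : KGraph k) where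
  toFun : Λ.Mor → Γ.Mor
  map_src : ∀ a, toFun (Λ.src a) = Γ.src (toFun a)
  map_rng : ∀ a, toFun (Λ.rng a) = Γ.rng (toFun a)
  map_comp : ∀ a b, Λ.src a = Λ.rng b →
    toFun (Λ.comp a b) = Γ.comp (toFun a) (toFun b)
  map_deg : ∀ a, Γ.deg (toFun a) = Λ.deg a

namespace KGraphHom

variable {k : ℕ} {Λ Γ Θ : KGraph k}

/-- The identity `k`-graph morphism. -/
def id (Λ : KGraph k) : KGraphHom Λ Λ :=
  ⟨fun a => a, fun _ => rfl, fun _ => rfl, fun _ _ _ => rfl, fun _ => rfl⟩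

/-- Composition of `k`-graph morphisms. -/
def comp (ψ : KGraphHom Γ Θ) (φ : KGraphHom Λ Γ) : KGraphHom Λ Θ where
  toFun := ψ.toFun ∘ φ.toFun
  map_src a := by simp [Function.comp, φ.map_src, ψ.map_src]
  map_rng a := by simp [Function.comp, φ.map_rng, ψ.map_rng]
  map_comp a b h := by
    simp only [Function.comp]
    rw [φ.map_comp a b h, ψ.map_comp _ _ (by rw [← φ.map_src, ← φ.map_rng, h])]
  map_deg a := by simp [Function.comp, φ.map_deg, ψ.map_deg]

/-- The induced map on points `(λ, t) ↦ (φ(λ), t)`. -/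
def pointMap (φ : KGraphHom Λ Γ) : Λ.Points → Γ.Points :=
  fun p => ⟨φ.toFun p.1, ⟨p.2.1, fun i => by rw [φ.map_deg]; exact p.2.2 i⟩⟩

/-- The induced map `φ̃ : X_Λ → X_Γ` on topological realizations,
`φ̃([λ,t]) = [φ(λ), t]` (defined via choice of representatives). -/
noncomputable def real (φ : KGraphHom Λ Γ) : Λ.Real → Γ.Real :=
  fun x => Quotient.mk Γ.ptSetoid (φ.pointMap (Quotient.out x))

end KGraphHom

/-- A covering of `k`-graphs: a surjective degree-preserving functor
`p : Ω → Λ` mapping `Ωv` bijectively onto `Λp(v)` and `vΩ` bijectively onto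
`p(v)Λ` for every vertex `v` of `Ω`. -/
def KGraphHom.IsCovering {k : ℕ} {Ω Λ : KGraph k} (p : KGraphHom Ω Λ) : Prop :=
  Function.Surjective p.toFun ∧
    ∀ v : Ω.Mor, Ω.deg v = 0 →
      Set.BijOn p.toFun { a | Ω.src a = v } { b | Λ.src b = p.toFun v } ∧
      Set.BijOn p.toFun { a | Ω.rng a = v } { b | Λ.rng b = p.toFun v }

/-- A `k`-graph is row-finite with no sources if `0 < |vΛⁿ| < ∞` for every
vertex `v` and every `n ∈ ℕᵏ`. -/
def KGraph.RowFiniteNoSources {k : ℕ} (Λ : KGraph k) : Prop :=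
  ∀ (v : Λ.Mor) (m : Fin k → ℕ), Λ.deg v = 0 →
    ({ a : Λ.Mor | Λ.rng a = v ∧ Λ.deg a = m }.Finite ∧
      { a : Λ.Mor | Λ.rng a = v ∧ Λ.deg a = m }.Nonempty)

section Lim

variable {k : ℕ} (Λs : ℕ → KGraph k) (ps : ∀ n, KGraphHom (Λs (n+1)) (Λs n))

/-- The points `{((λ_n)_n, t) : p_n(λ_n) = λ_{n-1}, 0 ≤ t ≤ d(λ_0)}` of the
projective-limit topological `k`-graph `lim← (Λ_n, p_n)`, topologized as a
subspace of the product of the (discrete) spaces `Λ_n` and of `ℝᵏ`.  (All the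
`λ_n` have the same degree since coverings preserve degrees.) -/
def LimPoints : Type :=
  { ft : (∀ n, (Λs n).Mor) × (Fin k → ℝ) //
    (∀ n, (ps n).toFun (ft.1 (n + 1)) = ft.1 n) ∧
    ∀ i, 0 ≤ ft.2 i ∧ ft.2 i ≤ ((Λs 0).deg (ft.1 0) i : ℝ) }

instance : TopologicalSpace (LimPoints Λs ps) := by
  letI : ∀ n, TopologicalSpace (Λs n).Mor := fun _ => ⊥
  unfold LimPoints
  infer_instance

/-- The realization relation `∼` for the projective-limit topological
`k`-graph, whose structure maps (in particular factorizations, hence segments)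
are computed coordinatewise. -/
def limRel : LimPoints Λs ps → LimPoints Λs ps → Prop := fun p q =>
  (∀ n, (Λs n).seg (p.1.1 n) (KGraph.fl p.1.2) (KGraph.ce p.1.2) =
      (Λs n).seg (q.1.1 n) (KGraph.fl q.1.2) (KGraph.ce q.1.2)) ∧
  KGraph.frac p.1.2 = KGraph.frac q.1.2

/-- `limRel` as a setoid. -/
def limSetoid : Setoid (LimPoints Λs ps) where
  r := limRel Λs ps
  iseqv := ⟨fun _ => ⟨fun _ => rfl, rfl⟩,
    fun h => ⟨fun n => (h.1 n).symm, h.2.symm⟩,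
    fun h h' => ⟨fun n => (h.1 n).trans (h'.1 n), h.2.trans h'.2⟩⟩

/-- The topological realization `X_{lim←(Λ_n,p_n)}` of the projective-limit
topological `k`-graph. -/
def LimReal : Type := Quotient (limSetoid Λs ps)

instance : TopologicalSpace (LimReal Λs ps) :=
  inferInstanceAs (TopologicalSpace (Quotient (limSetoid Λs ps)))

/-- The class `[(λ_n)_n, t]` in `X_{lim←(Λ_n,p_n)}`. -/
def limPt (f : ∀ n, (Λs n).Mor) (hf : ∀ n, (ps n).toFun (f (n + 1)) = f n)
    (t : Fin k → ℝ) (ht : ∀ i, 0 ≤ t i ∧ t i ≤ ((Λs 0).deg (f 0) i : ℝ)) :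
    LimReal Λs ps :=
  Quotient.mk (limSetoid Λs ps) ⟨(f, t), hf, ht⟩

/-- The projective limit `lim← (X_{Λ_n}, p̃_n)` of the topological realizations
along the induced covering maps, topologized as a subspace of the product. -/
def RealLim : Type :=
  { x : ∀ n, (Λs n).Real // ∀ n, (ps n).real (x (n + 1)) = x n }

instance : TopologicalSpace (RealLim Λs ps) :=
  inferInstanceAs (TopologicalSpace
    { x : ∀ n, (Λs n).Real // ∀ n, (ps n).real (x (n + 1)) = x n })

end Lim


namespace KGraph

variable {k : ℕ} {Λ Γ : KGraph k}

/-- The factorization property defining `seg`. -/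
def IsFac (Λ : KGraph k) (a : Λ.Mor) (m n : Fin k → ℕ) (b : Λ.Mor) : Prop :=
  Λ.deg b = n - m ∧ ∃ x y : Λ.Mor,
      Λ.deg x = m ∧ Λ.src x = Λ.rng b ∧ Λ.src b = Λ.rng y ∧
      a = Λ.comp x (Λ.comp b y)

theorem fac_unique {a : Λ.Mor} {m n : Fin k → ℕ} {b b' : Λ.Mor}
    (hb : Λ.IsFac a m n b) (hb' : Λ.IsFac a m n b') : b = b' := by
  obtain ⟨hdb, x, y, hdx, hsx, hsb, hxy⟩ := hb
  obtain ⟨hdb', x', y', hdx', hsx', hsb', hxy'⟩ := hb'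
  have h1 : Λ.src x = Λ.rng (Λ.comp b y) := by rw [Λ.rng_comp b y hsb]; exact hsx
  have h1' : Λ.src x' = Λ.rng (Λ.comp b' y') := by rw [Λ.rng_comp b' y' hsb']; exact hsx'
  have hDa : Λ.deg a = m + ((n - m) + Λ.deg y) := by
    rw [hxy, Λ.deg_comp _ _ h1, Λ.deg_comp _ _ hsb, hdx, hdb]
  have hDa' : Λ.deg a = m + ((n - m) + Λ.deg y') := by
    rw [hxy', Λ.deg_comp _ _ h1', Λ.deg_comp _ _ hsb', hdx', hdb']
  have hm : Λ.deg a = m + (Λ.deg a - m) := by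
    funext i
    have := congrFun hDa i
    simp only [Pi.add_apply, Pi.sub_apply] at this ⊢
    omega
  obtain ⟨P, -, hPuniq⟩ := Λ.factor a m (Λ.deg a - m) hm
  have e1 : (x, Λ.comp b y) = P := by
    apply hPuniq
    refine ⟨hdx, ?_, h1, hxy.symm⟩
    rw [Λ.deg_comp _ _ hsb, hdb]
    funext i
    have := congrFun hDa i
    simp only [Pi.add_apply, Pi.sub_apply] at this ⊢
    omega
  have e1' : (x', Λ.comp b' y') = P := by
    apply hPuniq
    refine ⟨hdx', ?_, h1', hxy'.symm⟩
    rw [Λ.deg_comp _ _ hsb', hdb']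
    funext i
    have := congrFun hDa' i
    simp only [Pi.add_apply, Pi.sub_apply] at this ⊢
    omega
  have ez : Λ.comp b y = Λ.comp b' y' := by
    have := e1.trans e1'.symm
    exact congrArg Prod.snd this
  -- now factor z
  set z := Λ.comp b y with hz
  have hdz : Λ.deg z = (n - m) + Λ.deg y := by rw [hz, Λ.deg_comp _ _ hsb, hdb]
  have hdz' : Λ.deg z = (n - m) + Λ.deg y' := by rw [ez, Λ.deg_comp _ _ hsb', hdb']
  have hm2 : Λ.deg z = (n - m) + (Λ.deg z - (n - m)) := by
    funext i
    have := congrFun hdz i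
    simp only [Pi.add_apply, Pi.sub_apply] at this ⊢
    omega
  obtain ⟨Q, -, hQuniq⟩ := Λ.factor z (n - m) (Λ.deg z - (n - m)) hm2
  have f1 : (b, y) = Q := by
    apply hQuniq
    refine ⟨hdb, ?_, hsb, rfl⟩
    funext i
    have := congrFun hdz i
    simp only [Pi.add_apply, Pi.sub_apply] at this ⊢
    omega
  have f1' : (b', y') = Q := by
    apply hQuniq
    refine ⟨hdb', ?_, hsb', ez.symm⟩
    funext i
    have h2 := congrFun hdz' i
    have h3 := congrFun hdz i
    simp only [Pi.add_apply, Pi.sub_apply] at h2 h3 ⊢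
    omega
  exact congrArg Prod.fst (f1.trans f1'.symm)

theorem seg_eq {a : Λ.Mor} {m n : Fin k → ℕ} {b : Λ.Mor}
    (hb : Λ.IsFac a m n b) : Λ.seg a m n = b := by
  unfold seg
  rw [dif_pos ⟨b, hb⟩]
  exact fac_unique (Exists.choose_spec (⟨b, hb⟩ : ∃ b, Λ.IsFac a m n b)) hb

theorem isFac_self {b : Λ.Mor} {n : Fin k → ℕ} (hd : Λ.deg b = n) :
    Λ.IsFac b 0 n b := by
  refine ⟨by simpa using hd, Λ.rng b, Λ.src b, Λ.deg_rng b, Λ.src_rng b, (Λ.rng_src b).symm, ?_⟩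
  rw [Λ.comp_id, Λ.id_comp]

theorem seg_self {b : Λ.Mor} {n : Fin k → ℕ} (hd : Λ.deg b = n) :
    Λ.seg b 0 n = b := seg_eq (isFac_self hd)

/-- Existence of factorizations from degree bounds. -/
theorem isFac_exists {a : Λ.Mor} {m n : Fin k → ℕ}
    (h1 : ∀ i, m i ≤ n i) (h2 : ∀ i, n i ≤ Λ.deg a i) :
    ∃ b, Λ.IsFac a m n b := by
  have hm : Λ.deg a = m + (Λ.deg a - m) := by
    funext i; simp only [Pi.add_apply, Pi.sub_apply]
    have := h1 i; have := h2 i; omega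
  obtain ⟨⟨x, z⟩, ⟨hdx, hdz, hsxz, hxz⟩, -⟩ := Λ.factor a m (Λ.deg a - m) hm
  have hm2 : Λ.deg z = (n - m) + (Λ.deg z - (n - m)) := by
    funext i
    have := congrFun hdz i
    simp only [Pi.add_apply, Pi.sub_apply] at this ⊢
    have := h1 i; have := h2 i; omega
  obtain ⟨⟨b, y⟩, ⟨hdb, hdy, hsby, hby⟩, -⟩ := Λ.factor z (n - m) (Λ.deg z - (n - m)) hm2
  refine ⟨b, hdb, x, y, hdx, ?_, hsby, ?_⟩
  · rw [← hby] at hsxz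
    rw [hsxz, Λ.rng_comp _ _ hsby]
  · rw [← hxz, hby]

theorem seg_isFac {a : Λ.Mor} {m n : Fin k → ℕ}
    (h1 : ∀ i, m i ≤ n i) (h2 : ∀ i, n i ≤ Λ.deg a i) :
    Λ.IsFac a m n (Λ.seg a m n) := by
  obtain ⟨b, hb⟩ := isFac_exists h1 h2
  rw [seg_eq hb]; exact hb

theorem deg_seg {a : Λ.Mor} {m n : Fin k → ℕ}
    (h1 : ∀ i, m i ≤ n i) (h2 : ∀ i, n i ≤ Λ.deg a i) :
    Λ.deg (Λ.seg a m n) = n - m := (seg_isFac h1 h2).1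

end KGraph

namespace KGraphHom

open KGraph

variable {k : ℕ} {Λ Γ : KGraph k}

theorem map_isFac (φ : KGraphHom Λ Γ) {a : Λ.Mor} {m n : Fin k → ℕ} {b : Λ.Mor}
    (hb : Λ.IsFac a m n b) : Γ.IsFac (φ.toFun a) m n (φ.toFun b) := by
  obtain ⟨hdb, x, y, hdx, hsx, hsb, hxy⟩ := hb
  refine ⟨by rw [φ.map_deg]; exact hdb, φ.toFun x, φ.toFun y, by rw [φ.map_deg]; exact hdx,
    ?_, ?_, ?_⟩
  · rw [← φ.map_src, ← φ.map_rng, hsx]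
  · rw [← φ.map_src, ← φ.map_rng, hsb]
  · rw [hxy, φ.map_comp _ _ (by rw [hsx, Λ.rng_comp _ _ hsb]),
      φ.map_comp _ _ hsb]

theorem map_seg (φ : KGraphHom Λ Γ) {a : Λ.Mor} {m n : Fin k → ℕ}
    (h1 : ∀ i, m i ≤ n i) (h2 : ∀ i, n i ≤ Λ.deg a i) :
    Γ.seg (φ.toFun a) m n = φ.toFun (Λ.seg a m n) :=
  seg_eq (φ.map_isFac (seg_isFac h1 h2))

end KGraphHom

namespace KGraph

variable {k : ℕ} {Λ : KGraph k}

/-- Composition of segments: the `(m,n)` segment of `a` equals the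
`(m - m', n - m')` segment of the `(m',n')` segment of `a`. -/
theorem seg_seg {a c' : Λ.Mor} {m' n' m n : Fin k → ℕ}
    (hc' : Λ.IsFac a m' n' c')
    (h1 : ∀ i, m' i ≤ m i) (h2 : ∀ i, m i ≤ n i) (h3 : ∀ i, n i ≤ n' i)
    (h4 : ∀ i, n' i ≤ Λ.deg a i) :
    Λ.seg c' (m - m') (n - m') = Λ.seg a m n := by
  have hdc' : Λ.deg c' = n' - m' := hc'.1
  have hb1 : ∀ i, (m - m') i ≤ (n - m') i := by
    intro i; simp only [Pi.sub_apply]; have := h1 i; have := h2 i; omega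
  have hb2 : ∀ i, (n - m') i ≤ Λ.deg c' i := by
    intro i; rw [hdc']; simp only [Pi.sub_apply]
    have := h1 i; have := h2 i; have := h3 i; omega
  set c := Λ.seg c' (m - m') (n - m') with hc
  have hcf : Λ.IsFac c' (m - m') (n - m') c := seg_isFac hb1 hb2
  -- expand both factorizations
  obtain ⟨hdc, u, w, hdu, hsu, hsc, hc'uw⟩ := hcf
  obtain ⟨-, x', y', hdx', hsx', hsc', haxy⟩ := hc'
  -- a = x' ((u (c w)) y') ; reassociate to  (x' u) (c (w y'))
  refine (seg_eq ?_).symm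
  -- composability facts
  have rngcw : Λ.rng (Λ.comp c w) = Λ.rng c := Λ.rng_comp _ _ hsc
  have hsu' : Λ.src u = Λ.rng (Λ.comp c w) := by rw [rngcw]; exact hsu
  have rngc' : Λ.rng c' = Λ.rng u := by rw [hc'uw, Λ.rng_comp _ _ hsu']
  have srcc' : Λ.src c' = Λ.src w := by
    rw [hc'uw, Λ.src_comp _ _ hsu', Λ.src_comp _ _ hsc]
  have hsw : Λ.src w = Λ.rng y' := by rw [← srcc']; exact hsc'
  have hsxu : Λ.src x' = Λ.rng u := by rw [hsx', rngc']
  -- the new factorization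
  refine ⟨?_, Λ.comp x' u, Λ.comp w y', ?_, ?_, ?_, ?_⟩
  · rw [hdc]; funext i; simp only [Pi.sub_apply]
    have := h1 i; have := h2 i; omega
  · rw [Λ.deg_comp _ _ hsxu, hdx', hdu]
    funext i; simp only [Pi.add_apply, Pi.sub_apply]
    have := h1 i; omega
  · rw [Λ.src_comp _ _ hsxu, hsu]
  · rw [Λ.rng_comp _ _ hsw]; exact hsc
  · have hscwy : Λ.src (Λ.comp c w) = Λ.rng y' := by
      rw [Λ.src_comp _ _ hsc]; exact hsw
    have hrngwy : Λ.rng (Λ.comp w y') = Λ.rng w := Λ.rng_comp _ _ hsw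
    have hsuZ : Λ.src u = Λ.rng (Λ.comp c (Λ.comp w y')) := by
      rw [Λ.rng_comp c (Λ.comp w y') (by rw [hrngwy]; exact hsc)]
      exact hsu
    rw [haxy, hc'uw, Λ.comp_assoc u (Λ.comp c w) y' hsu' hscwy,
      Λ.comp_assoc c w y' hsc hsw,
      ← Λ.comp_assoc x' u (Λ.comp c (Λ.comp w y')) hsxu hsuZ]

end KGraph


namespace KGraph

variable {k : ℕ} {Λ : KGraph k}

/-! ### Scalar floor/ceil lemmas -/

section scalar
variable {x : ℝ}

theorem toNat_cast_real {z : ℤ} (hz : 0 ≤ z) : ((z.toNat : ℕ) : ℝ) = (z : ℝ) := by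
  exact_mod_cast congrArg (fun n : ℤ => (n : ℝ)) (Int.toNat_of_nonneg hz)

theorem fl1_cast (hx : 0 ≤ x) : ((⌊x⌋.toNat : ℕ) : ℝ) = ((⌊x⌋ : ℤ) : ℝ) :=
  toNat_cast_real (Int.floor_nonneg.2 hx)

theorem ce1_cast (hx : 0 ≤ x) : ((⌈x⌉.toNat : ℕ) : ℝ) = ((⌈x⌉ : ℤ) : ℝ) :=
  toNat_cast_real (Int.ceil_nonneg hx)

theorem fl1_cast_le (hx : 0 ≤ x) : ((⌊x⌋.toNat : ℕ) : ℝ) ≤ x := by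
  rw [fl1_cast hx]; exact Int.floor_le x

theorem le_ce1_cast (hx : 0 ≤ x) : x ≤ ((⌈x⌉.toNat : ℕ) : ℝ) := by
  rw [ce1_cast hx]; exact Int.le_ceil x

theorem fl1_le_ce1 : ⌊x⌋.toNat ≤ ⌈x⌉.toNat :=
  Int.toNat_le_toNat (Int.floor_le_ceil x)

theorem ce1_le_of_le {d : ℕ} (h : x ≤ (d : ℝ)) : ⌈x⌉.toNat ≤ d := by
  have : ⌈x⌉ ≤ (d : ℤ) := Int.ceil_le.2 (by exact_mod_cast h)
  omega

theorem frac1_nonneg (hx : 0 ≤ x) : 0 ≤ x - ((⌊x⌋.toNat : ℕ) : ℝ) := by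
  have := fl1_cast_le hx; linarith

theorem frac1_lt_one (hx : 0 ≤ x) : x - ((⌊x⌋.toNat : ℕ) : ℝ) < 1 := by
  rw [fl1_cast hx]
  have := Int.lt_floor_add_one x; linarith

theorem fl1_frac1 (hx : 0 ≤ x) : (⌊x - ((⌊x⌋.toNat : ℕ) : ℝ)⌋).toNat = 0 := by
  have h1 := frac1_nonneg hx
  have h2 := frac1_lt_one hx
  have : ⌊x - ((⌊x⌋.toNat : ℕ) : ℝ)⌋ = 0 := Int.floor_eq_zero_iff.2 ⟨h1, h2⟩
  rw [this]; rfl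

theorem ce1_frac1 (hx : 0 ≤ x) :
    (⌈x - ((⌊x⌋.toNat : ℕ) : ℝ)⌉).toNat = ⌈x⌉.toNat - ⌊x⌋.toNat := by
  have hfl := fl1_cast hx
  by_cases hi : x = ((⌊x⌋.toNat : ℕ) : ℝ)
  · have h0 : x - ((⌊x⌋.toNat : ℕ) : ℝ) = 0 := by rw [← hi]; ring
    rw [h0]
    have hceq : ⌈x⌉ = ⌊x⌋ := by
      conv_lhs => rw [hi, hfl]
      simp
    simp [hceq]
  · have hlt : ((⌊x⌋.toNat : ℕ) : ℝ) < x := lt_of_le_of_ne (fl1_cast_le hx) (Ne.symm hi)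
    have h2 := frac1_lt_one hx
    have hce : ⌈x - ((⌊x⌋.toNat : ℕ) : ℝ)⌉ = 1 := by
      rw [Int.ceil_eq_iff]
      constructor
      · push_cast; linarith
      · push_cast; linarith
    have hcex : ⌈x⌉ = ⌊x⌋ + 1 := by
      rw [Int.ceil_eq_iff]
      rw [hfl] at hlt h2
      constructor
      · push_cast; linarith
      · push_cast; linarith
    rw [hce, hcex]
    have : (0:ℤ) ≤ ⌊x⌋ := Int.floor_nonneg.2 hx
    omega

theorem frac1_frac1 (hx : 0 ≤ x) :
    (x - ((⌊x⌋.toNat : ℕ) : ℝ)) - ((⌊x - ((⌊x⌋.toNat : ℕ) : ℝ)⌋.toNat : ℕ) : ℝ)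
      = x - ((⌊x⌋.toNat : ℕ) : ℝ) := by
  rw [fl1_frac1 hx]; simp

end scalar

/-! ### Vector versions -/

section vector
variable {t : Fin k → ℝ}

theorem fl_le (h0 : ∀ i, 0 ≤ t i) (i : Fin k) : ((fl t i : ℕ) : ℝ) ≤ t i :=
  fl1_cast_le (h0 i)

theorem le_ce (h0 : ∀ i, 0 ≤ t i) (i : Fin k) : t i ≤ ((ce t i : ℕ) : ℝ) :=
  le_ce1_cast (h0 i)

theorem fl_le_ce (i : Fin k) : fl t i ≤ ce t i := fl1_le_ce1

theorem ce_le_deg {a : Λ.Mor} (hd : ∀ i, t i ≤ (Λ.deg a i : ℝ)) (i : Fin k) :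
    ce t i ≤ Λ.deg a i := ce1_le_of_le (hd i)

theorem frac_nonneg (h0 : ∀ i, 0 ≤ t i) (i : Fin k) : 0 ≤ frac t i :=
  frac1_nonneg (h0 i)

theorem frac_lt_one (h0 : ∀ i, 0 ≤ t i) (i : Fin k) : frac t i < 1 :=
  frac1_lt_one (h0 i)

theorem fl_frac (h0 : ∀ i, 0 ≤ t i) : fl (frac t) = 0 := by
  funext i; exact fl1_frac1 (h0 i)

theorem ce_frac (h0 : ∀ i, 0 ≤ t i) : ce (frac t) = ce t - fl t := by
  funext i; exact ce1_frac1 (h0 i)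

theorem frac_frac (h0 : ∀ i, 0 ≤ t i) : frac (frac t) = frac t := by
  funext i; exact frac1_frac1 (h0 i)

theorem frac_le_sub (h0 : ∀ i, 0 ≤ t i) (i : Fin k) :
    frac t i ≤ ((ce t i - fl t i : ℕ) : ℝ) := by
  have h1 := frac_nonneg h0 i
  have h2 := frac_lt_one h0 i
  by_cases he : ce t i = fl t i
  · -- t i is an integer
    have hle := fl_le h0 i
    have hge := le_ce h0 i
    have ht : t i = ((fl t i : ℕ) : ℝ) := by
      rw [he] at hge; linarith
    have : frac t i = 0 := by
      show t i - ((fl t i : ℕ) : ℝ) = 0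
      rw [← ht]
      ring
    rw [this]
    positivity
  · have : 1 ≤ ce t i - fl t i := by have := fl_le_ce (t := t) i; omega
    have : (1 : ℝ) ≤ ((ce t i - fl t i : ℕ) : ℝ) := by exact_mod_cast this
    linarith

end vector

/-! ### Canonical representatives -/

/-- The canonical cell of a point `(a, t)`. -/
noncomputable def canonMor (Λ : KGraph k) (a : Λ.Mor) (t : Fin k → ℝ) : Λ.Mor :=
  Λ.seg a (fl t) (ce t)

theorem canonMor_isFac {a : Λ.Mor} {t : Fin k → ℝ}
    (h0 : ∀ i, 0 ≤ t i) (hd : ∀ i, t i ≤ (Λ.deg a i : ℝ)) :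
    Λ.IsFac a (fl t) (ce t) (Λ.canonMor a t) :=
  seg_isFac (fun i => fl_le_ce i) (fun i => ce_le_deg hd i)

theorem deg_canonMor {a : Λ.Mor} {t : Fin k → ℝ}
    (h0 : ∀ i, 0 ≤ t i) (hd : ∀ i, t i ≤ (Λ.deg a i : ℝ)) :
    Λ.deg (Λ.canonMor a t) = ce t - fl t := (canonMor_isFac h0 hd).1

theorem frac_mem_canonMor {a : Λ.Mor} {t : Fin k → ℝ}
    (h0 : ∀ i, 0 ≤ t i) (hd : ∀ i, t i ≤ (Λ.deg a i : ℝ)) (i : Fin k) :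
    0 ≤ frac t i ∧ frac t i ≤ (Λ.deg (Λ.canonMor a t) i : ℝ) := by
  refine ⟨frac_nonneg h0 i, ?_⟩
  rw [deg_canonMor h0 hd]
  exact frac_le_sub h0 i

/-- Idempotence: the canonical cell of the canonical point is itself. -/
theorem canonMor_frac {a : Λ.Mor} {t : Fin k → ℝ}
    (h0 : ∀ i, 0 ≤ t i) (hd : ∀ i, t i ≤ (Λ.deg a i : ℝ)) :
    Λ.canonMor (Λ.canonMor a t) (frac t) = Λ.canonMor a t := by
  unfold canonMor
  rw [fl_frac h0, ce_frac h0]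
  exact seg_self (deg_canonMor h0 hd)

/-- A point is `ptRel`-related to its canonical representative. -/
theorem ptRel_canon {a : Λ.Mor} {t : Fin k → ℝ}
    (ht : ∀ i, 0 ≤ t i ∧ t i ≤ (Λ.deg a i : ℝ)) :
    Λ.ptRel ⟨a, ⟨t, ht⟩⟩
      ⟨Λ.canonMor a t, ⟨frac t, frac_mem_canonMor (fun i => (ht i).1) (fun i => (ht i).2)⟩⟩ := by
  have h0 : ∀ i, 0 ≤ t i := fun i => (ht i).1
  have hd : ∀ i, t i ≤ (Λ.deg a i : ℝ) := fun i => (ht i).2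
  constructor
  · exact (canonMor_frac h0 hd).symm
  · exact (frac_frac h0).symm

theorem ptRel_iff_canon {p q : Λ.Points} :
    Λ.ptRel p q ↔ (Λ.canonMor p.1 p.2.1 = Λ.canonMor q.1 q.2.1 ∧ frac p.2.1 = frac q.2.1) :=
  Iff.rfl

end KGraph


open KGraph

namespace KGraphHom

variable {k : ℕ} {Λ Γ : KGraph k}

theorem map_canonMor (φ : KGraphHom Λ Γ) {a : Λ.Mor} {t : Fin k → ℝ}
    (h0 : ∀ i, 0 ≤ t i) (hd : ∀ i, t i ≤ (Λ.deg a i : ℝ)) :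
    Γ.canonMor (φ.toFun a) t = φ.toFun (Λ.canonMor a t) :=
  φ.map_seg (fun i => fl_le_ce i) (fun i => ce_le_deg hd i)

theorem ptRel_pointMap (φ : KGraphHom Λ Γ) {p q : Λ.Points} (h : Λ.ptRel p q) :
    Γ.ptRel (φ.pointMap p) (φ.pointMap q) := by
  obtain ⟨h1, h2⟩ := h
  refine ⟨?_, h2⟩
  show Γ.canonMor (φ.toFun p.1) p.2.1 = Γ.canonMor (φ.toFun q.1) q.2.1
  rw [φ.map_canonMor (fun i => (p.2.2 i).1) (fun i => (p.2.2 i).2),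
    φ.map_canonMor (fun i => (q.2.2 i).1) (fun i => (q.2.2 i).2)]
  exact congrArg φ.toFun h1

theorem real_mk (φ : KGraphHom Λ Γ) (p : Λ.Points) :
    φ.real (Quotient.mk Λ.ptSetoid p) = Quotient.mk Γ.ptSetoid (φ.pointMap p) := by
  apply Quotient.sound
  exact φ.ptRel_pointMap (Quotient.exact (Quotient.out_eq (Quotient.mk Λ.ptSetoid p)))

end KGraphHom

namespace KGraph

variable {k : ℕ} {Λ : KGraph k}

/-- Equal points from equal data. -/
theorem points_ext {a a' : Λ.Mor} {t t' : Fin k → ℝ} {h h'}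
    (ha : a = a') (ht : t = t') :
    (⟨a, ⟨t, h⟩⟩ : Λ.Points) = ⟨a', ⟨t', h'⟩⟩ := by
  subst ha; subst ht; rfl

end KGraph

section Lim

variable {k : ℕ} {Λs : ℕ → KGraph k} {ps : ∀ n, KGraphHom (Λs (n+1)) (Λs n)}

theorem deg_chain {f : ∀ n, (Λs n).Mor} (hf : ∀ n, (ps n).toFun (f (n + 1)) = f n) :
    ∀ n, (Λs n).deg (f n) = (Λs 0).deg (f 0) := by
  intro n
  induction n with
  | zero => rfl
  | succ n ih =>
      rw [← ih, ← hf n, (ps n).map_deg]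

/-- Bounds transfer to all levels. -/
theorem bounds_chain (w : LimPoints Λs ps) (n : ℕ) :
    ∀ i, 0 ≤ w.1.2 i ∧ w.1.2 i ≤ ((Λs n).deg (w.1.1 n) i : ℝ) := by
  intro i
  refine ⟨(w.2.2 i).1, ?_⟩
  rw [deg_chain w.2.1 n]
  exact (w.2.2 i).2

/-- The canonical representative of a point of the projective-limit `k`-graph. -/
noncomputable def canonLim (w : LimPoints Λs ps) : LimPoints Λs ps := by
  refine ⟨⟨fun n => (Λs n).canonMor (w.1.1 n) w.1.2, KGraph.frac w.1.2⟩, ?_, ?_⟩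
  · intro n
    exact ((ps n).map_canonMor (fun i => (bounds_chain w (n+1) i).1)
      (fun i => (bounds_chain w (n+1) i).2)).symm.trans
      (by rw [w.2.1 n])
  · intro i
    exact frac_mem_canonMor (fun i => (bounds_chain w 0 i).1)
      (fun i => (bounds_chain w 0 i).2) i

theorem limRel_canonLim (w : LimPoints Λs ps) : limRel Λs ps w (canonLim w) := by
  constructor
  · intro n
    exact ((Λs n).canonMor_frac (fun i => (bounds_chain w n i).1)
      (fun i => (bounds_chain w n i).2)).symm
  · exact (KGraph.frac_frac (fun i => (w.2.2 i).1)).symm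

theorem canonLim_fst (w : LimPoints Λs ps) (n : ℕ) :
    (canonLim w).1.1 n = (Λs n).canonMor (w.1.1 n) w.1.2 := rfl

theorem canonLim_snd (w : LimPoints Λs ps) :
    (canonLim w).1.2 = KGraph.frac w.1.2 := rfl

theorem limRel_iff_canon {w w' : LimPoints Λs ps} :
    limRel Λs ps w w' ↔ canonLim w = canonLim w' := by
  constructor
  · rintro ⟨h1, h2⟩
    apply Subtype.ext
    refine Prod.ext ?_ ?_
    · funext n; exact h1 n
    · exact h2
  · intro h
    have h1 : ∀ n, (canonLim w).1.1 n = (canonLim w').1.1 n := fun n => by rw [h]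
    have h2 : (canonLim w).1.2 = (canonLim w').1.2 := by rw [h]
    exact ⟨fun n => h1 n, h2⟩

end Lim


open KGraph

/-! ### Quotient topology helpers -/

section QuotHelp

variable {α : Type*} [TopologicalSpace α] {s : Setoid α}

theorem saturated_preimage_image {S : Set α}
    (hsat : ∀ p q : α, s.r p q → (p ∈ S ↔ q ∈ S)) :
    Quotient.mk s ⁻¹' (Quotient.mk s '' S) = S := by
  ext x
  constructor
  · rintro ⟨y, hy, hxy⟩
    exact (hsat x y (Quotient.exact hxy.symm)).2 hy
  · intro hx
    exact ⟨x, hx, rfl⟩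

theorem isOpen_mk_image {S : Set α} (hS : IsOpen S)
    (hsat : ∀ p q : α, s.r p q → (p ∈ S ↔ q ∈ S)) :
    IsOpen (Quotient.mk s '' S) := by
  rw [isOpen_coinduced (f := Quotient.mk s)]
  rw [saturated_preimage_image hsat]
  exact hS

theorem saturated_of_preimage_open {U : Set (Quotient s)} (p q : α) (h : s.r p q) :
    p ∈ Quotient.mk s ⁻¹' U ↔ q ∈ Quotient.mk s ⁻¹' U := by
  simp only [Set.mem_preimage]
  rw [Quotient.sound h]

end QuotHelp

/-! ### Openness criterion for `Points` -/

namespace KGraph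

variable {k : ℕ} {Λ : KGraph k}

theorem points_isOpen (S : Set Λ.Points)
    (h : ∀ p ∈ S, ∃ η > 0, ∀ (t' : Fin k → ℝ)
      (h' : ∀ i, 0 ≤ t' i ∧ t' i ≤ (Λ.deg p.1 i : ℝ)),
      (∀ i, |t' i - p.2.1 i| < η) → (⟨p.1, ⟨t', h'⟩⟩ : Λ.Points) ∈ S) :
    IsOpen S := by
  refine isOpen_sigma_iff.mpr ?_
  intro a
  rw [isOpen_iff_mem_nhds]
  rintro ⟨t, ht⟩ hmem
  obtain ⟨η, hη, hball⟩ := h _ hmem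
  refine (mem_nhds_subtype {x : Fin k → ℝ | ∀ i, 0 ≤ x i ∧ x i ≤ (Λ.deg a i : ℝ)} ⟨t, ht⟩ _).mpr ?_
  refine ⟨Metric.ball t η, Metric.ball_mem_nhds _ hη, ?_⟩
  rintro ⟨t', ht'⟩ hd
  simp only [Set.mem_preimage] at hd ⊢
  have hd' : ∀ i, |t' i - t i| < η := by
    intro i
    have : dist t' t < η := hd
    have := dist_le_pi_dist t' t i
    rw [Real.dist_eq] at this
    linarith
  exact hball t' ht' hd'

end KGraph

/-! ### Boxes in `LimPoints` -/

section LimTop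

variable {k : ℕ} {Λs : ℕ → KGraph k} {ps : ∀ n, KGraphHom (Λs (n+1)) (Λs n)}

/-- A basic open box in `LimPoints`. -/
def limBox (f : ∀ n, (Λs n).Mor) (t : Fin k → ℝ) (L : ℕ) (η : ℝ) :
    Set (LimPoints Λs ps) :=
  {w | (∀ m ≤ L, w.1.1 m = f m) ∧ ∀ i, |w.1.2 i - t i| < η}

theorem isOpen_limBox (f : ∀ n, (Λs n).Mor) (t : Fin k → ℝ) (L : ℕ) (η : ℝ) :
    IsOpen (limBox (ps := ps) f t L η) := by
  letI : ∀ n, TopologicalSpace (Λs n).Mor := fun _ => ⊥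
  haveI : ∀ n, DiscreteTopology (Λs n).Mor := fun _ => ⟨rfl⟩
  have h1 : Continuous (Subtype.val : LimPoints Λs ps →
      (∀ n, (Λs n).Mor) × (Fin k → ℝ)) := continuous_subtype_val
  have hmor : ∀ m, Continuous (fun w : LimPoints Λs ps => w.1.1 m) := fun m =>
    (continuous_apply m).comp (continuous_fst.comp h1)
  have hre : ∀ i, Continuous (fun w : LimPoints Λs ps => w.1.2 i) := fun i =>
    (continuous_apply i).comp (continuous_snd.comp h1)
  have : limBox (ps := ps) f t L η =
      (⋂ m : Fin (L+1), {w : LimPoints Λs ps | w.1.1 m = f m}) ∩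
      (⋂ i : Fin k, {w : LimPoints Λs ps | |w.1.2 i - t i| < η}) := by
    ext w
    simp only [limBox, Set.mem_setOf_eq, Set.mem_inter_iff, Set.mem_iInter]
    constructor
    · rintro ⟨hA, hB⟩
      exact ⟨fun m => hA m (Nat.lt_succ_iff.1 m.2), fun i => hB i⟩
    · rintro ⟨hA, hB⟩
      refine ⟨fun m hm => hA ⟨m, Nat.lt_succ_iff.2 hm⟩, fun i => hB i⟩
  rw [this]
  apply IsOpen.inter
  · apply isOpen_iInter_of_finite
    intro m
    exact (hmor m).isOpen_preimage {f m} (isOpen_discrete _)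
  · apply isOpen_iInter_of_finite
    intro i
    have hcont : Continuous (fun w : LimPoints Λs ps => |w.1.2 i - t i|) :=
      ((hre i).sub continuous_const).abs
    exact isOpen_lt hcont continuous_const

theorem exists_limBox_subset {V : Set (LimPoints Λs ps)} (hV : IsOpen V)
    {w : LimPoints Λs ps} (hw : w ∈ V) :
    ∃ L : ℕ, ∃ η > 0, limBox (ps := ps) w.1.1 w.1.2 L η ⊆ V := by
  letI : ∀ n, TopologicalSpace (Λs n).Mor := fun _ => ⊥
  haveI : ∀ n, DiscreteTopology (Λs n).Mor := fun _ => ⟨rfl⟩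
  obtain ⟨U, hU, hUV⟩ := isOpen_induced_iff.1 hV
  have hwU : w.val ∈ U := by rw [← hUV] at hw; exact hw
  rw [isOpen_iff_mem_nhds] at hU
  have hU' := hU _ hwU
  rw [mem_nhds_prod_iff] at hU'
  obtain ⟨A, hA, B, hB, hAB⟩ := hU'
  -- analyse A : neighbourhood in the discrete Pi space
  rw [nhds_pi, Filter.mem_pi] at hA
  obtain ⟨I, hIfin, tset, htset, hIsub⟩ := hA
  obtain ⟨L, hL⟩ := hIfin.bddAbove
  -- analyse B : neighbourhood in ℝ^k
  obtain ⟨η, hη, hball⟩ := Metric.mem_nhds_iff.1 hB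
  refine ⟨L, η, hη, ?_⟩
  intro w' hw'
  have h1 : w'.val.1 ∈ A := by
    apply hIsub
    intro m hm
    have : w'.1.1 m = w.1.1 m := hw'.1 m (hL hm)
    rw [this]
    have := htset m
    rw [nhds_discrete] at this
    exact this
  have h2 : w'.val.2 ∈ B := by
    apply hball
    rw [Metric.mem_ball, dist_pi_lt_iff hη]
    intro i
    rw [Real.dist_eq]
    exact hw'.2 i
  have : w'.val ∈ U := hAB ⟨h1, h2⟩
  rw [← hUV]
  exact this

end LimTop


open KGraph

section Chains

variable {k : ℕ} {Λs : ℕ → KGraph k} {ps : ∀ n, KGraphHom (Λs (n+1)) (Λs n)}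

/-- The set of coherent lift chains through a given morphism at level `N`. -/
def ChainSet (ps : ∀ n, KGraphHom (Λs (n+1)) (Λs n)) (N : ℕ) (c : (Λs N).Mor) :
    Set (∀ n, (Λs n).Mor) :=
  {g | (∀ n, (ps n).toFun (g (n+1)) = g n) ∧ g N = c}

theorem chainProj_finite
    (hfin : ∀ n (b : (Λs n).Mor), { a | (ps n).toFun a = b }.Finite)
    (N : ℕ) (c : (Λs N).Mor) (n : ℕ) :
    ((fun g => g n) '' ChainSet ps N c).Finite := by
  have base : ((fun g => g N) '' ChainSet ps N c).Finite := by
    apply Set.Finite.subset (Set.finite_singleton c)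
    rintro _ ⟨g, hg, rfl⟩
    exact hg.2
  have up : ∀ j, ((fun g => g (N + j)) '' ChainSet ps N c).Finite := by
    intro j
    induction j with
    | zero => exact base
    | succ j ih =>
        apply Set.Finite.subset (Set.Finite.biUnion ih
          (fun b _ => hfin (N + j) b))
        rintro _ ⟨g, hg, rfl⟩
        refine Set.mem_biUnion ⟨g, hg, rfl⟩ ?_
        show (ps (N + j)).toFun (g (N + j + 1)) = g (N + j)
        exact hg.1 (N + j)
  have down : ∀ j, ((fun g => g (N - j)) '' ChainSet ps N c).Finite := by
    intro j
    induction j with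
    | zero => exact base
    | succ j ih =>
        have step : ∀ m : ℕ, ((fun g => g (m+1)) '' ChainSet ps N c).Finite →
            ((fun g => g m) '' ChainSet ps N c).Finite := by
          intro m hm
          apply Set.Finite.subset (Set.Finite.image (ps m).toFun hm)
          rintro _ ⟨g, hg, rfl⟩
          exact ⟨g (m+1), ⟨g, hg, rfl⟩, hg.1 m⟩
        by_cases hj : j < N
        · apply step (N - (j+1))
          rw [show N - (j+1) + 1 = N - j from by omega]
          exact ih
        · rw [show N - (j+1) = N - j from by omega]
          exact ih
  rcases le_or_gt n N with h | h
  · have : n = N - (N - n) := by omega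
    rw [this]; exact down (N - n)
  · have : n = N + (n - N) := by omega
    rw [this]; exact up (n - N)

theorem isCompact_chainFiber
    (hfin : ∀ n (b : (Λs n).Mor), { a | (ps n).toFun a = b }.Finite)
    (N : ℕ) (c : (Λs N).Mor) (u : Fin k → ℝ) :
    IsCompact {w : LimPoints Λs ps | w.1.1 N = c ∧ w.1.2 = u} := by
  letI : ∀ n, TopologicalSpace (Λs n).Mor := fun _ => ⊥
  haveI : ∀ n, DiscreteTopology (Λs n).Mor := fun _ => ⟨rfl⟩
  refine (Topology.IsEmbedding.isCompact_iff Topology.IsEmbedding.subtypeVal).mpr ?_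
  have himg : Subtype.val '' {w : LimPoints Λs ps | w.1.1 N = c ∧ w.1.2 = u} =
      ((Set.univ.pi (fun n => (fun g => g n) '' ChainSet ps N c)) ×ˢ ({u} : Set (Fin k → ℝ)))
      ∩ {p : (∀ n, (Λs n).Mor) × (Fin k → ℝ) |
          (∀ n, (ps n).toFun (p.1 (n+1)) = p.1 n) ∧ p.1 N = c ∧
          (∀ i, 0 ≤ p.2 i ∧ p.2 i ≤ ((Λs 0).deg (p.1 0) i : ℝ))} := by
    ext p
    constructor
    · rintro ⟨w, ⟨hc, hu⟩, rfl⟩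
      exact ⟨⟨fun n _ => ⟨w.1.1, ⟨w.2.1, hc⟩, rfl⟩, by simpa using hu⟩, w.2.1, hc, w.2.2⟩
    · rintro ⟨⟨-, hu⟩, hcompat, hc, hbd⟩
      simp only [Set.mem_singleton_iff] at hu
      refine ⟨⟨p, hcompat, hbd⟩, ⟨hc, hu⟩, rfl⟩
  refine (congrArg (fun s => IsCompact s) himg).mpr ?_
  apply IsCompact.inter_right
  · exact IsCompact.prod
      (isCompact_univ_pi (fun n => ((chainProj_finite hfin N c n).isCompact)))
      isCompact_singleton
  · have hvalcont : Continuous (fun p : (∀ n, (Λs n).Mor) × (Fin k → ℝ) => p.1) :=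
      continuous_fst
    have e : {p : (∀ n, (Λs n).Mor) × (Fin k → ℝ) |
          (∀ n, (ps n).toFun (p.1 (n+1)) = p.1 n) ∧ p.1 N = c ∧
          (∀ i, 0 ≤ p.2 i ∧ p.2 i ≤ ((Λs 0).deg (p.1 0) i : ℝ))} =
        (⋂ n : ℕ, {p : (∀ n, (Λs n).Mor) × (Fin k → ℝ) |
            (ps n).toFun (p.1 (n+1)) = p.1 n}) ∩
        (({p : (∀ n, (Λs n).Mor) × (Fin k → ℝ) | p.1 N = c}) ∩
          ⋂ i : Fin k, ({p : (∀ n, (Λs n).Mor) × (Fin k → ℝ) | 0 ≤ p.2 i} ∩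
            {p : (∀ n, (Λs n).Mor) × (Fin k → ℝ) |
              p.2 i ≤ ((Λs 0).deg (p.1 0) i : ℝ)})) := by
      ext p
      simp only [Set.mem_setOf_eq, Set.mem_inter_iff, Set.mem_iInter]
      all_goals tauto
    rw [e]
    have hmor : ∀ m, Continuous
        (fun p : (∀ n, (Λs n).Mor) × (Fin k → ℝ) => p.1 m) := fun m =>
      (continuous_apply m).comp continuous_fst
    refine IsClosed.inter (isClosed_iInter fun n => ?_)
      (IsClosed.inter ?_ (isClosed_iInter fun i => IsClosed.inter ?_ ?_))
    · exact isClosed_eq ((continuous_of_discreteTopology (α := (Λs (n+1)).Mor)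
        (f := (ps n).toFun)).comp (hmor (n+1))) (hmor n)
    · exact isClosed_eq (hmor N) continuous_const
    · exact isClosed_le continuous_const ((continuous_apply i).comp continuous_snd)
    · exact isClosed_le ((continuous_apply i).comp continuous_snd)
        ((continuous_of_discreteTopology
          (f := fun a : (Λs 0).Mor => ((Λs 0).deg a i : ℝ))).comp (hmor 0))

/-- **Uniformization Lemma.** If all points of a compact chain fiber lie in an
open set `V`, then a uniform real-coordinate radius works. -/
theorem uniform_box
    (hfin : ∀ n (b : (Λs n).Mor), { a | (ps n).toFun a = b }.Finite)
    {V : Set (LimPoints Λs ps)} (hV : IsOpen V)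
    {N : ℕ} {c : (Λs N).Mor} {u : Fin k → ℝ}
    (hu : ∀ i, 0 ≤ u i ∧ u i ≤ ((Λs N).deg c i : ℝ))
    (hall : ∀ w : LimPoints Λs ps, w.1.1 N = c → w.1.2 = u → w ∈ V) :
    ∃ η > 0, ∀ w : LimPoints Λs ps, w.1.1 N = c →
      (∀ i, |w.1.2 i - u i| < η) → w ∈ V := by
  classical
  set K := {w : LimPoints Λs ps | w.1.1 N = c ∧ w.1.2 = u} with hK
  have hKV : K ⊆ V := fun w hw => hall w hw.1 hw.2
  have hKcpt : IsCompact K := isCompact_chainFiber hfin N c u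
  -- the element of K sharing chain with a given admissible w
  have mkK : ∀ w : LimPoints Λs ps, w.1.1 N = c →
      ∃ w' : LimPoints Λs ps, w' ∈ K ∧ w'.1.1 = w.1.1 ∧ w'.1.2 = u := by
    intro w hwc
    have hdeg : (Λs 0).deg (w.1.1 0) = (Λs N).deg c := by
      rw [← hwc]
      exact (deg_chain w.2.1 N).symm
    refine ⟨⟨⟨w.1.1, u⟩, w.2.1, ?_⟩, ⟨hwc, rfl⟩, rfl, rfl⟩
    intro i
    rw [hdeg]
    exact hu i
  by_cases hKe : K = ∅
  · refine ⟨1, one_pos, ?_⟩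
    intro w hwc _
    obtain ⟨w', hw', -, -⟩ := mkK w hwc
    rw [hKe] at hw'
    exact absurd hw' (Set.notMem_empty _)
  · -- choose a box around each point of K
    have hbox : ∀ w : LimPoints Λs ps, w ∈ K →
        ∃ L : ℕ, ∃ η > 0, limBox (ps := ps) w.1.1 w.1.2 L η ⊆ V := by
      intro w hw
      exact exists_limBox_subset hV (hKV hw)
    choose! L η hηpos hsub using hbox
    have hcover : K ⊆ ⋃ w ∈ K, limBox (ps := ps) w.1.1 w.1.2 (L w) (η w) := by
      intro w hw
      refine Set.mem_biUnion hw ?_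
      exact ⟨fun m _ => rfl, fun i => by simpa using hηpos w hw⟩
    obtain ⟨t, htsub, htfin, hcov⟩ :=
      hKcpt.elim_finite_subcover_image
        (fun w hw => isOpen_limBox (ps := ps) w.1.1 w.1.2 (L w) (η w)) hcover
    haveI := htfin.fintype
    have htne : t.Nonempty := by
      rcases Set.nonempty_iff_ne_empty.2 hKe with ⟨w, hw⟩
      obtain ⟨w', hw't, _⟩ := Set.mem_iUnion₂.1 (hcov hw)
      exact ⟨w', hw't⟩
    obtain ⟨η₀, hη₀pos, hη₀le⟩ : ∃ η₀ > 0, ∀ w' ∈ t, η₀ ≤ η w' := by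
      have : ∀ w' ∈ htfin.toFinset, 0 < η w' := by
        intro w' hw'
        exact hηpos w' (htsub (htfin.mem_toFinset.1 hw'))
      refine ⟨htfin.toFinset.inf' (by
          rcases htne with ⟨w', hw'⟩
          exact ⟨w', htfin.mem_toFinset.2 hw'⟩) η, ?_, ?_⟩
      · exact (Finset.lt_inf'_iff _).2 this
      · intro w' hw'
        exact Finset.inf'_le η (htfin.mem_toFinset.2 hw')
    refine ⟨η₀, hη₀pos, ?_⟩
    intro w hwc hwnear
    obtain ⟨w', hw'K, hchain, hw'u⟩ := mkK w hwc
    have := hcov hw'K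
    obtain ⟨wc, hwct, hwcbox⟩ := Set.mem_iUnion₂.1 this
    apply hsub wc (htsub hwct)
    obtain ⟨hbc, hbu⟩ := hwcbox
    constructor
    · intro m hm
      rw [← hchain]
      exact hbc m hm
    · intro i
      have hwcu : wc.1.2 = u := (htsub hwct).2
      have h3 : |w.1.2 i - u i| < η₀ := hwnear i
      have h4 : η₀ ≤ η wc := hη₀le wc hwct
      rw [hwcu]
      linarith

end Chains


open KGraph

namespace KGraph

variable {k : ℕ} {Λ : KGraph k}

/-- The canonical representative of a point. -/
noncomputable def canonPt (Λ : KGraph k) (p : Λ.Points) : Λ.Points :=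
  ⟨Λ.canonMor p.1 p.2.1, ⟨frac p.2.1,
    frac_mem_canonMor (fun i => (p.2.2 i).1) (fun i => (p.2.2 i).2)⟩⟩

theorem ptRel_canonPt (p : Λ.Points) : Λ.ptRel p (Λ.canonPt p) := ptRel_canon p.2.2

theorem canonPt_eq_of_rel {p q : Λ.Points} (h : Λ.ptRel p q) :
    Λ.canonPt p = Λ.canonPt q := points_ext h.1 h.2

theorem canonPt_idem (p : Λ.Points) : Λ.canonPt (Λ.canonPt p) = Λ.canonPt p :=
  (canonPt_eq_of_rel (ptRel_canonPt p)).symm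

/-- Canonical representative of a class. -/
noncomputable def classCanon (Λ : KGraph k) (x : Λ.Real) : Λ.Points :=
  Λ.canonPt (Quotient.out x)

theorem classCanon_mk (p : Λ.Points) :
    Λ.classCanon (Quotient.mk Λ.ptSetoid p) = Λ.canonPt p := by
  apply canonPt_eq_of_rel
  exact (Quotient.exact (Quotient.out_eq (Quotient.mk Λ.ptSetoid p)) :
    Λ.ptSetoid.r _ p)

theorem mk_classCanon (x : Λ.Real) :
    Quotient.mk Λ.ptSetoid (Λ.classCanon x) = x := by
  conv_rhs => rw [← Quotient.out_eq x]
  exact (Quotient.sound (ptRel_canonPt _)).symm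

theorem continuous_mkPoints : Continuous (Quotient.mk Λ.ptSetoid : Λ.Points → Λ.Real) :=
  continuous_quot_mk

end KGraph

namespace KGraphHom

variable {k : ℕ} {Λ Γ : KGraph k}

theorem pointMap_canonPt (φ : KGraphHom Λ Γ) (p : Λ.Points) :
    Γ.canonPt (φ.pointMap p) = φ.pointMap (Λ.canonPt p) := by
  apply KGraph.points_ext
  · exact φ.map_canonMor (fun i => (p.2.2 i).1) (fun i => (p.2.2 i).2)
  · rfl

theorem classCanon_real (φ : KGraphHom Λ Γ) (x : Λ.Real) :
    Γ.classCanon (φ.real x) = φ.pointMap (Λ.classCanon x) := by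
  show Γ.classCanon (Quotient.mk Γ.ptSetoid (φ.pointMap (Quotient.out x))) = _
  rw [Γ.classCanon_mk, φ.pointMap_canonPt]
  rfl

end KGraphHom

section Fwd

variable {k : ℕ} {Λs : ℕ → KGraph k} {ps : ∀ n, KGraphHom (Λs (n+1)) (Λs n)}

/-- The level-`n` point of an element of `LimPoints`. -/
def levelPt (w : LimPoints Λs ps) (n : ℕ) : (Λs n).Points :=
  ⟨w.1.1 n, ⟨w.1.2, bounds_chain w n⟩⟩

theorem pointMap_levelPt (w : LimPoints Λs ps) (n : ℕ) :
    (ps n).pointMap (levelPt w (n+1)) = levelPt w n :=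
  KGraph.points_ext (w.2.1 n) rfl

/-- The forward map `LimPoints → RealLim`. -/
noncomputable def fwd (w : LimPoints Λs ps) : RealLim Λs ps :=
  ⟨fun n => Quotient.mk _ (levelPt w n), by
    intro n
    rw [(ps n).real_mk (levelPt w (n+1))]
    exact congrArg _ (pointMap_levelPt w n)⟩

theorem fwd_resp (w w' : LimPoints Λs ps) (h : limRel Λs ps w w') : fwd w = fwd w' := by
  apply Subtype.ext
  funext n
  exact Quotient.sound ⟨h.1 n, h.2⟩

/-- The inverse map data: the canonical chain of an element of `RealLim`. -/
noncomputable def backChain (y : RealLim Λs ps) : LimPoints Λs ps := by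
  refine ⟨⟨fun n => ((Λs n).classCanon (y.1 n)).1, ((Λs 0).classCanon (y.1 0)).2.1⟩, ?_, ?_⟩
  · intro n
    have h1 : (Λs n).classCanon (y.1 n) = (ps n).pointMap ((Λs (n+1)).classCanon (y.1 (n+1))) := by
      rw [← (ps n).classCanon_real, y.2 n]
    show (ps n).toFun ((Λs (n+1)).classCanon (y.1 (n+1))).1 = ((Λs n).classCanon (y.1 n)).1
    rw [h1]
    rfl
  · exact ((Λs 0).classCanon (y.1 0)).2.2

theorem backChain_snd_eq (y : RealLim Λs ps) (n : ℕ) :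
    ((Λs n).classCanon (y.1 n)).2.1 = ((Λs 0).classCanon (y.1 0)).2.1 := by
  induction n with
  | zero => rfl
  | succ n ih =>
      rw [← ih]
      have h1 : (Λs n).classCanon (y.1 n) =
          (ps n).pointMap ((Λs (n+1)).classCanon (y.1 (n+1))) := by
        rw [← (ps n).classCanon_real, y.2 n]
      rw [h1]
      rfl

theorem levelPt_backChain (y : RealLim Λs ps) (n : ℕ) :
    levelPt (backChain y) n = (Λs n).classCanon (y.1 n) :=
  KGraph.points_ext rfl (backChain_snd_eq y n).symm

theorem fwd_backChain (y : RealLim Λs ps) : fwd (backChain y) = y := by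
  apply Subtype.ext
  funext n
  show Quotient.mk _ (levelPt (backChain y) n) = y.1 n
  rw [levelPt_backChain y n]
  exact KGraph.mk_classCanon _

theorem backChain_fwd (w : LimPoints Λs ps) : backChain (fwd w) = canonLim w := by
  apply Subtype.ext
  refine Prod.ext ?_ ?_
  · funext n
    show ((Λs n).classCanon (Quotient.mk _ (levelPt w n))).1 = _
    rw [(Λs n).classCanon_mk]
    rfl
  · show ((Λs 0).classCanon (Quotient.mk _ (levelPt w 0))).2.1 = KGraph.frac w.1.2
    rw [(Λs 0).classCanon_mk]
    rfl

/-- The underlying equivalence. -/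
noncomputable def limEquiv (Λs : ℕ → KGraph k) (ps : ∀ n, KGraphHom (Λs (n+1)) (Λs n)) :
    LimReal Λs ps ≃ RealLim Λs ps where
  toFun := Quotient.lift fwd fwd_resp
  invFun := fun y => Quotient.mk (limSetoid Λs ps) (backChain y)
  left_inv := by
    intro x
    induction x using Quotient.ind with
    | _ w =>
        show Quotient.mk _ (backChain (fwd w)) = _
        rw [backChain_fwd]
        exact (Quotient.sound (limRel_canonLim w)).symm
  right_inv := by
    intro y
    exact fwd_backChain y

theorem limEquiv_mk (w : LimPoints Λs ps) :
    limEquiv Λs ps (Quotient.mk (limSetoid Λs ps) w) = fwd w := rfl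

/-- Continuity of the forward map. -/
theorem continuous_fwd : Continuous (fwd : LimPoints Λs ps → RealLim Λs ps) := by
  apply Continuous.subtype_mk
  apply continuous_pi
  intro n
  -- the map w ↦ ⟦levelPt w n⟧
  refine continuous_iff_continuousAt.mpr ?_
  intro w₀
  have hA : IsOpen {w : LimPoints Λs ps | w.1.1 n = w₀.1.1 n} := by
    letI : ∀ n, TopologicalSpace (Λs n).Mor := fun _ => ⊥
    haveI : ∀ n, DiscreteTopology (Λs n).Mor := fun _ => ⟨rfl⟩
    have h1 : Continuous (Subtype.val : LimPoints Λs ps →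
        (∀ n, (Λs n).Mor) × (Fin k → ℝ)) := continuous_subtype_val
    have h2 : Continuous (fun w : LimPoints Λs ps => w.1.1 n) :=
      (continuous_apply n).comp (continuous_fst.comp h1)
    have heq : {w : LimPoints Λs ps | w.1.1 n = w₀.1.1 n} =
        (fun w : LimPoints Λs ps => w.1.1 n) ⁻¹' {w₀.1.1 n} := rfl
    rw [heq]
    exact h2.isOpen_preimage _ (isOpen_discrete _)
  apply ContinuousOn.continuousAt _ (hA.mem_nhds rfl)
  refine continuousOn_iff_continuous_restrict.mpr ?_
  have hrest : Set.restrict {w : LimPoints Λs ps | w.1.1 n = w₀.1.1 n}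
      (fun w : LimPoints Λs ps => Quotient.mk ((Λs n).ptSetoid) (levelPt w n)) =
      fun a => Quotient.mk ((Λs n).ptSetoid)
        ⟨w₀.1.1 n, ⟨a.val.1.2, fun i => by
          have := bounds_chain a.val n i
          rwa [a.2] at this⟩⟩ := by
    funext a
    exact congrArg _ (KGraph.points_ext a.2 rfl)
  refine (congrArg (fun f => Continuous f) hrest).mpr ?_
  apply KGraph.continuous_mkPoints.comp
  exact continuous_sigmaMk.comp (Continuous.subtype_mk (by
    letI : ∀ n, TopologicalSpace (Λs n).Mor := fun _ => ⊥
    have h1 : Continuous (Subtype.val : LimPoints Λs ps →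
        (∀ n, (Λs n).Mor) × (Fin k → ℝ)) := continuous_subtype_val
    exact (continuous_snd.comp h1).comp continuous_subtype_val) _)

theorem continuous_limEquiv : Continuous (limEquiv Λs ps) := by
  have h : Continuous (Quotient.lift (fwd : LimPoints Λs ps → RealLim Λs ps) fwd_resp :
      LimReal Λs ps → RealLim Λs ps) := Continuous.quotient_lift continuous_fwd _
  exact h

end Fwd


open KGraph

/-! ### Scalar window-shift lemmas -/

section ScalarWin

variable {x x' : ℝ}

theorem win_stay (hx : 0 ≤ x) (h1 : ((⌊x⌋.toNat : ℕ) : ℝ) < x')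
    (h2 : x' < ((⌈x⌉.toNat : ℕ) : ℝ)) :
    ⌊x'⌋.toNat = ⌊x⌋.toNat ∧ ⌈x'⌉.toNat = ⌈x⌉.toNat := by
  rw [fl1_cast hx] at h1
  rw [ce1_cast hx] at h2
  have hcf : ⌈x⌉ ≤ ⌊x⌋ + 1 := Int.ceil_le_floor_add_one x
  have hcfR : ((⌈x⌉ : ℤ) : ℝ) ≤ ((⌊x⌋ : ℤ) : ℝ) + 1 := by exact_mod_cast hcf
  have hfl' : ⌊x'⌋ = ⌊x⌋ := by
    rw [Int.floor_eq_iff]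
    exact ⟨le_of_lt h1, by push_cast; linarith⟩
  have hce' : ⌈x'⌉ = ⌈x⌉ := by
    rw [Int.ceil_eq_iff]
    exact ⟨by push_cast; linarith, le_of_lt h2⟩
  rw [hfl', hce']
  exact ⟨rfl, rfl⟩

theorem win_int_ce (hx : 0 ≤ x) (hi : x = ((⌊x⌋.toNat : ℕ) : ℝ)) :
    ⌈x⌉.toNat = ⌊x⌋.toNat := by
  have hxfl : x = ((⌊x⌋ : ℤ) : ℝ) := by
    conv_lhs => rw [hi]
    exact fl1_cast hx
  have : ⌈x⌉ = ⌊x⌋ := by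
    conv_lhs => rw [hxfl]
    exact Int.ceil_intCast _
  rw [this]

theorem win_down (hx : 0 ≤ x) (hi : x = ((⌊x⌋.toNat : ℕ) : ℝ))
    (hge : 1 ≤ ⌊x⌋.toNat) (h1 : x - 1/2 < x') (h2 : x' < x) :
    ⌊x'⌋.toNat = ⌊x⌋.toNat - 1 ∧ ⌈x'⌉.toNat = ⌊x⌋.toNat := by
  have hflz : (1 : ℤ) ≤ ⌊x⌋ := by
    have := Int.floor_nonneg.2 hx; omega
  have hxfl : x = ((⌊x⌋ : ℤ) : ℝ) := by
    conv_lhs => rw [hi]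
    exact fl1_cast hx
  have hfl' : ⌊x'⌋ = ⌊x⌋ - 1 := by
    rw [Int.floor_eq_iff]
    constructor
    · push_cast
      rw [hxfl] at h1
      linarith
    · push_cast
      rw [hxfl] at h2
      linarith
  have hce' : ⌈x'⌉ = ⌊x⌋ := by
    rw [Int.ceil_eq_iff]
    constructor
    · push_cast
      rw [hxfl] at h1
      linarith
    · rw [hxfl] at h2
      exact le_of_lt h2
  rw [hfl', hce']
  omega

theorem win_up (hx : 0 ≤ x) (hi : x = ((⌊x⌋.toNat : ℕ) : ℝ))
    (h1 : x < x') (h2 : x' < x + 1/2) :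
    ⌊x'⌋.toNat = ⌊x⌋.toNat ∧ ⌈x'⌉.toNat = ⌊x⌋.toNat + 1 := by
  have hflz : (0 : ℤ) ≤ ⌊x⌋ := Int.floor_nonneg.2 hx
  have hxfl : x = ((⌊x⌋ : ℤ) : ℝ) := by
    conv_lhs => rw [hi]
    exact fl1_cast hx
  have hfl' : ⌊x'⌋ = ⌊x⌋ := by
    rw [Int.floor_eq_iff]
    constructor
    · rw [hxfl] at h1
      exact le_of_lt h1
    · push_cast
      rw [hxfl] at h2
      linarith
  have hce' : ⌈x'⌉ = ⌊x⌋ + 1 := by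
    rw [Int.ceil_eq_iff]
    constructor
    · push_cast
      rw [hxfl] at h1
      linarith
    · push_cast
      rw [hxfl] at h2
      linarith
  rw [hfl', hce']
  omega

theorem nonint_gaps (hx : 0 ≤ x) (hne : x ≠ ((⌊x⌋.toNat : ℕ) : ℝ)) :
    ((⌊x⌋.toNat : ℕ) : ℝ) < x ∧ x < ((⌈x⌉.toNat : ℕ) : ℝ) := by
  have h1 : ((⌊x⌋.toNat : ℕ) : ℝ) < x := lt_of_le_of_ne (fl1_cast_le hx) (Ne.symm hne)
  refine ⟨h1, lt_of_le_of_ne (le_ce1_cast hx) ?_⟩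
  intro h
  apply hne
  have hce : (⌈x⌉ : ℝ) = x := by
    rw [ce1_cast hx] at h
    exact h.symm
  have hfx : ⌊x⌋ = ⌈x⌉ := by
    conv_lhs => rw [← hce]
    exact Int.floor_intCast _
  rw [fl1_cast hx, hfx, hce]

end ScalarWin

/-! ### Window patterns -/

section Pat

variable {k : ℕ}

/-- Lower window corner for a perturbation pattern. -/
noncomputable def patM (t : Fin k → ℝ) (p : Fin k → Fin 3) : Fin k → ℕ :=
  fun i => if p i = 0 then KGraph.fl t i - 1 else KGraph.fl t i

/-- Upper window corner for a perturbation pattern. -/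
noncomputable def patN (t : Fin k → ℝ) (p : Fin k → Fin 3) : Fin k → ℕ :=
  fun i => if p i = 2 then KGraph.ce t i + 1 else KGraph.ce t i

/-- Realizability of a pattern. -/
def patRea {k : ℕ} (Λ : KGraph k) (μ : Λ.Mor) (t : Fin k → ℝ) (p : Fin k → Fin 3) : Prop :=
  ∀ i, (p i ≠ 1 → t i = ((KGraph.fl t i : ℕ) : ℝ)) ∧ (p i = 0 → 1 ≤ KGraph.fl t i) ∧
    (p i = 2 → KGraph.ce t i < Λ.deg μ i)

/-- The position of `t` relative to the shifted window. -/
noncomputable def patU (t : Fin k → ℝ) (p : Fin k → Fin 3) : Fin k → ℝ :=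
  fun i => t i - ((patM t p i : ℕ) : ℝ)

variable {Λ : KGraph k} {μ : Λ.Mor} {t : Fin k → ℝ} {p : Fin k → Fin 3}

theorem pat_ineq (ht : ∀ i, 0 ≤ t i ∧ t i ≤ (Λ.deg μ i : ℝ)) (hrea : patRea Λ μ t p) :
    ∀ i, patM t p i ≤ KGraph.fl t i ∧ KGraph.fl t i ≤ KGraph.ce t i ∧
      KGraph.ce t i ≤ patN t p i ∧ patN t p i ≤ Λ.deg μ i := by
  intro i
  have hfc : KGraph.fl t i ≤ KGraph.ce t i := KGraph.fl_le_ce i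
  have hcd : KGraph.ce t i ≤ Λ.deg μ i := KGraph.ce_le_deg (fun j => (ht j).2) i
  refine ⟨?_, hfc, ?_, ?_⟩
  · unfold patM; split <;> omega
  · unfold patN; split <;> omega
  · unfold patN; split
    · have := (hrea i).2.2 (by assumption); omega
    · exact hcd

theorem patU_fl (h0 : ∀ i, 0 ≤ t i) (hrea : patRea Λ μ t p) :
    KGraph.fl (patU t p) = KGraph.fl t - patM t p := by
  funext i
  show (⌊patU t p i⌋).toNat = KGraph.fl t i - patM t p i
  unfold patU patM
  rcases (hrea i) with ⟨hint, hge, -⟩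
  by_cases h1 : p i = 0
  · have hi := hint (by rw [h1]; decide)
    have hg := hge h1
    rw [if_pos h1]
    have he : t i - ((KGraph.fl t i - 1 : ℕ) : ℝ) = 1 := by
      rw [hi]
      have hcast : ((KGraph.fl t i - 1 : ℕ) : ℝ) = ((KGraph.fl t i : ℕ) : ℝ) - 1 := by
        push_cast [hg]; ring
      rw [hcast]; ring
    rw [he]
    have h1' : (⌊(1:ℝ)⌋).toNat = 1 := by norm_num
    omega
  · rw [if_neg h1]
    by_cases h2 : p i = 2
    · have hi := hint (by rw [h2]; decide)
      have he : t i - ((KGraph.fl t i : ℕ) : ℝ) = 0 := by rw [hi]; ring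
      rw [he]
      have h0' : (⌊(0:ℝ)⌋).toNat = 0 := by norm_num
      omega
    · -- p i = 1
      have := KGraph.fl1_frac1 (h0 i)
      have hss : KGraph.fl t i - KGraph.fl t i = 0 := Nat.sub_self _
      rw [hss]
      exact this

theorem patU_ce (h0 : ∀ i, 0 ≤ t i) (hrea : patRea Λ μ t p) :
    KGraph.ce (patU t p) = KGraph.ce t - patM t p := by
  funext i
  show (⌈patU t p i⌉).toNat = KGraph.ce t i - patM t p i
  unfold patU patM
  rcases (hrea i) with ⟨hint, hge, -⟩
  by_cases h1 : p i = 0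
  · have hi := hint (by rw [h1]; decide)
    have hg := hge h1
    have hcf : KGraph.ce t i = KGraph.fl t i := win_int_ce (h0 i) hi
    rw [if_pos h1]
    have he : t i - ((KGraph.fl t i - 1 : ℕ) : ℝ) = 1 := by
      rw [hi]
      have hcast : ((KGraph.fl t i - 1 : ℕ) : ℝ) = ((KGraph.fl t i : ℕ) : ℝ) - 1 := by
        push_cast [hg]; ring
      rw [hcast]; ring
    rw [he, hcf]
    have h1' : (⌈(1:ℝ)⌉).toNat = 1 := by norm_num
    omega
  · rw [if_neg h1]
    by_cases h2 : p i = 2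
    · have hi := hint (by rw [h2]; decide)
      have hcf : KGraph.ce t i = KGraph.fl t i := win_int_ce (h0 i) hi
      have he : t i - ((KGraph.fl t i : ℕ) : ℝ) = 0 := by rw [hi]; ring
      rw [he, hcf]
      have h0' : (⌈(0:ℝ)⌉).toNat = 0 := by norm_num
      omega
    · exact KGraph.ce1_frac1 (h0 i)

theorem patU_frac (h0 : ∀ i, 0 ≤ t i) (hrea : patRea Λ μ t p) :
    KGraph.frac (patU t p) = KGraph.frac t := by
  funext i
  show patU t p i - ((KGraph.fl (patU t p) i : ℕ) : ℝ) = t i - ((KGraph.fl t i : ℕ) : ℝ)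
  rw [patU_fl h0 hrea]
  have hM : patM t p i ≤ KGraph.fl t i := by
    unfold patM; split <;> omega
  show patU t p i - (((KGraph.fl t i - patM t p i : ℕ)) : ℝ) = _
  unfold patU
  push_cast [hM]
  ring

theorem patU_bounds (ht : ∀ i, 0 ≤ t i ∧ t i ≤ (Λ.deg μ i : ℝ)) (hrea : patRea Λ μ t p) :
    ∀ i, 0 ≤ patU t p i ∧ patU t p i ≤ ((patN t p i - patM t p i : ℕ) : ℝ) := by
  intro i
  obtain ⟨hMf, hfc, hcN, hNd⟩ := pat_ineq ht hrea i
  have hfl := KGraph.fl_le (fun j => (ht j).1) i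
  have hce := KGraph.le_ce (fun j => (ht j).1) i
  have hMr : ((patM t p i : ℕ) : ℝ) ≤ ((KGraph.fl t i : ℕ) : ℝ) := by exact_mod_cast hMf
  have hNr : ((KGraph.ce t i : ℕ) : ℝ) ≤ ((patN t p i : ℕ) : ℝ) := by exact_mod_cast hcN
  constructor
  · unfold patU; linarith
  · unfold patU
    have : ((patN t p i - patM t p i : ℕ) : ℝ) =
        ((patN t p i : ℕ) : ℝ) - ((patM t p i : ℕ) : ℝ) := by
      push_cast [le_trans hMf (le_trans hfc hcN)]
      ring
    rw [this]
    linarith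

end Pat

/-! ### The key saturated open set -/

section What

variable {k : ℕ} {Λs : ℕ → KGraph k} {ps : ∀ n, KGraphHom (Λs (n+1)) (Λs n)}

/-- The saturated set of level-`N` points all whose coherent chain lifts lie in `V`. -/
def What (ps : ∀ n, KGraphHom (Λs (n+1)) (Λs n)) (V : Set (LimPoints Λs ps)) (N : ℕ) :
    Set (Λs N).Points :=
  {z | ∀ w : LimPoints Λs ps,
    w.1.1 N = (Λs N).canonMor z.1 z.2.1 → w.1.2 = KGraph.frac z.2.1 → w ∈ V}

theorem What_sat {V : Set (LimPoints Λs ps)} {N : ℕ} {z z' : (Λs N).Points}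
    (h : (Λs N).ptRel z z') : z ∈ What ps V N ↔ z' ∈ What ps V N := by
  have h1 : (Λs N).canonMor z.1 z.2.1 = (Λs N).canonMor z'.1 z'.2.1 := h.1
  have h2 : KGraph.frac z.2.1 = KGraph.frac z'.2.1 := h.2
  unfold What
  simp only [Set.mem_setOf_eq, h1, h2]

theorem What_open
    (hfin : ∀ n (b : (Λs n).Mor), { a | (ps n).toFun a = b }.Finite)
    {V : Set (LimPoints Λs ps)} (hV : IsOpen V)
    (hsat : ∀ w w' : LimPoints Λs ps, limRel Λs ps w w' → (w ∈ V ↔ w' ∈ V))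
    (N : ℕ) : IsOpen (What ps V N) := by
  classical
  apply KGraph.points_isOpen
  rintro ⟨μ, t, ht⟩ hz
  have h0 : ∀ i, 0 ≤ t i := fun i => (ht i).1
  -- capture radii for each pattern
  have key : ∀ p : Fin k → Fin 3, ∃ ηp > 0, patRea (Λs N) μ t p →
      ∀ w : LimPoints Λs ps, w.1.1 N = (Λs N).seg μ (patM t p) (patN t p) →
        (∀ i, |w.1.2 i - patU t p i| < ηp) → w ∈ V := by
    intro p
    by_cases hrea : patRea (Λs N) μ t p
    · have hineq := pat_ineq ht hrea
      have hMN : ∀ i, patM t p i ≤ patN t p i := fun i => by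
        have := hineq i; omega
      have hNd : ∀ i, patN t p i ≤ (Λs N).deg μ i := fun i => (hineq i).2.2.2
      have hfac : (Λs N).IsFac μ (patM t p) (patN t p)
          ((Λs N).seg μ (patM t p) (patN t p)) := KGraph.seg_isFac hMN hNd
      have hall : ∀ w : LimPoints Λs ps,
          w.1.1 N = (Λs N).seg μ (patM t p) (patN t p) → w.1.2 = patU t p → w ∈ V := by
        intro w hwN hwu
        refine (hsat w (canonLim w) (limRel_canonLim w)).2 (hz (canonLim w) ?_ ?_)
        · show (Λs N).canonMor (w.1.1 N) w.1.2 = (Λs N).canonMor μ t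
          rw [hwN, hwu]
          show (Λs N).seg _ (KGraph.fl (patU t p)) (KGraph.ce (patU t p)) = _
          rw [patU_fl h0 hrea, patU_ce h0 hrea]
          exact KGraph.seg_seg hfac (fun i => (hineq i).1) (fun i => (hineq i).2.1)
            (fun i => (hineq i).2.2.1) hNd
        · show KGraph.frac w.1.2 = KGraph.frac t
          rw [hwu]
          exact patU_frac h0 hrea
      have hu : ∀ i, 0 ≤ patU t p i ∧ patU t p i ≤
          (((Λs N).deg ((Λs N).seg μ (patM t p) (patN t p)) i : ℕ) : ℝ) := by
        intro i
        have hb := patU_bounds ht hrea i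
        have hdeg := congrFun hfac.1 i
        refine ⟨hb.1, ?_⟩
        rw [hdeg]
        exact hb.2
      obtain ⟨η, hη, hcapt⟩ := uniform_box hfin hV hu hall
      exact ⟨η, hη, fun _ => hcapt⟩
    · exact ⟨1, one_pos, fun h => absurd h hrea⟩
  choose ηf hηf hcap using key
  -- the gap radius
  set gap : Fin k → ℝ := fun i =>
    if t i = ((KGraph.fl t i : ℕ) : ℝ) then 1
    else min (t i - ((KGraph.fl t i : ℕ) : ℝ)) (((KGraph.ce t i : ℕ) : ℝ) - t i) with hgap
  have hgappos : ∀ i, 0 < gap i := by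
    intro i
    rw [hgap]
    dsimp only
    split
    · norm_num
    · next hne =>
        obtain ⟨hl, hr⟩ := nonint_gaps (h0 i) hne
        have hl' : ((KGraph.fl t i : ℕ) : ℝ) < t i := hl
        have hr' : t i < ((KGraph.ce t i : ℕ) : ℝ) := hr
        exact lt_min (by linarith) (by linarith)
  -- the final radius
  set F : Finset ℝ :=
    insert (1/2 : ℝ) ((Finset.univ.image gap) ∪ (Finset.univ.image ηf)) with hF
  have hFne : F.Nonempty := ⟨1/2, by simp [hF]⟩
  set η := F.min' hFne with hη
  have hηpos : 0 < η := by
    rw [hη, Finset.lt_min'_iff]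
    intro b hb
    rw [hF] at hb
    rcases Finset.mem_insert.1 hb with h | h
    · rw [h]; norm_num
    · rcases Finset.mem_union.1 h with h | h
      · obtain ⟨i, -, rfl⟩ := Finset.mem_image.1 h
        exact hgappos i
      · obtain ⟨p, -, rfl⟩ := Finset.mem_image.1 h
        exact hηf p
  have hηhalf : η ≤ 1/2 := Finset.min'_le _ _ (by simp [hF])
  have hηgap : ∀ i, η ≤ gap i := fun i =>
    Finset.min'_le _ _ (by
      rw [hF]
      exact Finset.mem_insert_of_mem (Finset.mem_union_left _
        (Finset.mem_image_of_mem gap (Finset.mem_univ i))))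
  have hηpat : ∀ p, η ≤ ηf p := fun p =>
    Finset.min'_le _ _ (by
      rw [hF]
      exact Finset.mem_insert_of_mem (Finset.mem_union_right _
        (Finset.mem_image_of_mem ηf (Finset.mem_univ p))))
  refine ⟨η, hηpos, ?_⟩
  intro t' h' hnear
  -- the realized pattern
  set p : Fin k → Fin 3 := fun i =>
    if t' i < ((KGraph.fl t i : ℕ) : ℝ) then 0
    else if ((KGraph.ce t i : ℕ) : ℝ) < t' i then 2 else 1 with hp
  have coord : ∀ i, (KGraph.fl t' i = patM t p i ∧ KGraph.ce t' i = patN t p i) ∧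
      ((p i ≠ 1 → t i = ((KGraph.fl t i : ℕ) : ℝ)) ∧ (p i = 0 → 1 ≤ KGraph.fl t i) ∧
        (p i = 2 → KGraph.ce t i < (Λs N).deg μ i)) := by
    intro i
    have hnear2 : |t' i - t i| < 1/2 := lt_of_lt_of_le (hnear i) hηhalf
    have hneargap : |t' i - t i| < gap i := lt_of_lt_of_le (hnear i) (hηgap i)
    by_cases hint : t i = ((KGraph.fl t i : ℕ) : ℝ)
    · have hce : KGraph.ce t i = KGraph.fl t i := win_int_ce (h0 i) hint
      rcases lt_trichotomy (t' i) (t i) with hlt | heq | hgt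
      · -- pattern 0
        have hpi : p i = 0 := by
          rw [hp]
          dsimp only
          rw [if_pos (by rw [← hint]; exact hlt)]
        have hge1 : 1 ≤ KGraph.fl t i := by
          have h0' : 0 ≤ t' i := (h' i).1
          have : (0:ℝ) < ((KGraph.fl t i : ℕ) : ℝ) := by
            rw [← hint]; linarith
          exact_mod_cast Nat.one_le_iff_ne_zero.2 (by
            intro hzz
            rw [hzz] at this
            norm_num at this)
        have hwin := win_down (h0 i) hint hge1 (by
          have := abs_lt.1 hnear2
          linarith [this.1]) hlt
        refine ⟨⟨?_, ?_⟩, fun _ => hint, fun _ => hge1, fun hc => by rw [hpi] at hc; exact absurd hc (by decide)⟩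
        · show (⌊t' i⌋).toNat = patM t p i
          unfold patM
          rw [if_pos hpi]
          exact hwin.1
        · show (⌈t' i⌉).toNat = patN t p i
          unfold patN
          rw [if_neg (by rw [hpi]; decide), hce]
          exact hwin.2
      · -- pattern 1 (equal)
        have hpi : p i = 1 := by
          rw [hp]
          dsimp only
          rw [if_neg (by rw [heq, ← hint]; exact lt_irrefl _),
            if_neg (by rw [heq, hce, ← hint]; exact lt_irrefl _)]
        refine ⟨⟨?_, ?_⟩, fun hc => absurd hpi hc,
          fun hc => by rw [hpi] at hc; exact absurd hc (by decide),
          fun hc => by rw [hpi] at hc; exact absurd hc (by decide)⟩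
        · show (⌊t' i⌋).toNat = patM t p i
          unfold patM
          rw [if_neg (by rw [hpi]; decide), heq]
          rfl
        · show (⌈t' i⌉).toNat = patN t p i
          unfold patN
          rw [if_neg (by rw [hpi]; decide), heq]
          rfl
      · -- pattern 2
        have hpi : p i = 2 := by
          rw [hp]
          dsimp only
          rw [if_neg (by rw [← hint]; linarith),
            if_pos (by
              have : ((KGraph.ce t i : ℕ) : ℝ) = t i := by
                rw [hce, ← hint]
              rw [this]; exact hgt)]
        have hwin := win_up (h0 i) hint hgt (by
          have := abs_lt.1 hnear2
          linarith [this.2])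
        have hcd : KGraph.ce t i < (Λs N).deg μ i := by
          have h1 : t' i ≤ (((Λs N).deg μ i : ℕ) : ℝ) := (h' i).2
          have h2 : ((KGraph.ce t i : ℕ) : ℝ) < t' i := by
            rw [hce, ← hint]; exact hgt
          have : ((KGraph.ce t i : ℕ) : ℝ) < (((Λs N).deg μ i : ℕ) : ℝ) := lt_of_lt_of_le h2 h1
          exact_mod_cast this
        refine ⟨⟨?_, ?_⟩, fun _ => hint,
          fun hc => by rw [hpi] at hc; exact absurd hc (by decide), fun _ => hcd⟩
        · show (⌊t' i⌋).toNat = patM t p i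
          unfold patM
          rw [if_neg (by rw [hpi]; decide)]
          exact hwin.1
        · show (⌈t' i⌉).toNat = patN t p i
          unfold patN
          rw [if_pos hpi, hce]
          exact hwin.2
    · -- noninteger coordinate: pattern 1
      obtain ⟨hl, hr⟩ := nonint_gaps (h0 i) hint
      have hgapi : gap i = min (t i - ((KGraph.fl t i : ℕ) : ℝ)) (((KGraph.ce t i : ℕ) : ℝ) - t i) := by
        rw [hgap]
        dsimp only
        rw [if_neg hint]
      have habs := abs_lt.1 hneargap
      rw [hgapi] at habs
      have hflt : ((KGraph.fl t i : ℕ) : ℝ) < t' i := by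
        have := habs.1
        linarith [min_le_left (t i - ((KGraph.fl t i : ℕ) : ℝ)) (((KGraph.ce t i : ℕ) : ℝ) - t i)]
      have hclt : t' i < ((KGraph.ce t i : ℕ) : ℝ) := by
        have := habs.2
        linarith [min_le_right (t i - ((KGraph.fl t i : ℕ) : ℝ)) (((KGraph.ce t i : ℕ) : ℝ) - t i)]
      have hpi : p i = 1 := by
        rw [hp]
        dsimp only
        rw [if_neg (by linarith), if_neg (by linarith)]
      have hwin := win_stay (h0 i) hflt hclt
      refine ⟨⟨?_, ?_⟩, fun hc => absurd hpi hc,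
        fun hc => by rw [hpi] at hc; exact absurd hc (by decide),
        fun hc => by rw [hpi] at hc; exact absurd hc (by decide)⟩
      · show (⌊t' i⌋).toNat = patM t p i
        unfold patM
        rw [if_neg (by rw [hpi]; decide)]
        exact hwin.1
      · show (⌈t' i⌉).toNat = patN t p i
        unfold patN
        rw [if_neg (by rw [hpi]; decide)]
        exact hwin.2
  have hrea : patRea (Λs N) μ t p := fun i => (coord i).2
  have hflp : KGraph.fl t' = patM t p := funext fun i => (coord i).1.1
  have hcep : KGraph.ce t' = patN t p := funext fun i => (coord i).1.2
  -- conclude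
  intro w hwN hwu
  refine hcap p hrea w ?_ ?_
  · show w.1.1 N = _
    rw [hwN]
    show (Λs N).seg μ (KGraph.fl t') (KGraph.ce t') = _
    rw [hflp, hcep]
  · intro i
    rw [hwu]
    show |(t' i - ((KGraph.fl t' i : ℕ) : ℝ)) - patU t p i| < ηf p
    have : patU t p i = t i - ((patM t p i : ℕ) : ℝ) := rfl
    rw [this, hflp]
    have he : t' i - ((patM t p i : ℕ) : ℝ) - (t i - ((patM t p i : ℕ) : ℝ)) = t' i - t i := by
      ring
    rw [he]
    exact lt_of_lt_of_le (hnear i) (hηpat p)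

end What


open KGraph

section Assemble

variable {k : ℕ} {Λs : ℕ → KGraph k} {ps : ∀ n, KGraphHom (Λs (n+1)) (Λs n)}

theorem chain_below {w w' : LimPoints Λs ps} {N : ℕ} (h : w.1.1 N = w'.1.1 N) :
    ∀ m, m ≤ N → w.1.1 m = w'.1.1 m := by
  have key : ∀ j, w.1.1 (N - j) = w'.1.1 (N - j) := by
    intro j
    induction j with
    | zero => exact h
    | succ j ih =>
        by_cases hj : j < N
        · have hs : N - j = (N - (j+1)) + 1 := by omega
          rw [hs] at ih
          have h1 := w.2.1 (N - (j+1))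
          have h2 := w'.2.1 (N - (j+1))
          rw [← h1, ← h2, ih]
        · rw [show N - (j+1) = N - j from by omega]
          exact ih
  intro m hm
  have := key (N - m)
  rwa [show N - (N - m) = m from by omega] at this

theorem continuous_limEquiv_symm
    (hfin : ∀ n (b : (Λs n).Mor), { a | (ps n).toFun a = b }.Finite) :
    Continuous (limEquiv Λs ps).symm := by
  rw [continuous_def]
  intro U hU
  have himg : (limEquiv Λs ps).symm ⁻¹' U = (limEquiv Λs ps) '' U :=
    (Equiv.image_eq_preimage_symm _ _).symm
  rw [himg, isOpen_iff_forall_mem_open]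
  rintro y ⟨ξ, hξU, rfl⟩
  have hmkc : Continuous (Quotient.mk (limSetoid Λs ps) :
      LimPoints Λs ps → LimReal Λs ps) := continuous_quot_mk
  have hVopen : IsOpen (Quotient.mk (limSetoid Λs ps) ⁻¹' U) :=
    hmkc.isOpen_preimage U hU
  set V := Quotient.mk (limSetoid Λs ps) ⁻¹' U with hVdef
  have hsat : ∀ w w' : LimPoints Λs ps, limRel Λs ps w w' → (w ∈ V ↔ w' ∈ V) :=
    fun w w' h => saturated_of_preimage_open w w' h
  set w₀ := Quotient.out ξ with hw₀def
  have hw₀ : Quotient.mk (limSetoid Λs ps) w₀ = ξ := Quotient.out_eq ξ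
  have hw₀V : w₀ ∈ V := by
    show Quotient.mk (limSetoid Λs ps) w₀ ∈ U
    rw [hw₀]
    exact hξU
  have hcV : canonLim w₀ ∈ V := (hsat _ _ (limRel_canonLim w₀)).1 hw₀V
  obtain ⟨N, η, hη, hbox⟩ := exists_limBox_subset hVopen hcV
  have hzW : levelPt w₀ N ∈ What ps V N := by
    intro w hwN hwu
    apply hbox
    constructor
    · intro m hm
      have hN : w.1.1 N = (canonLim w₀).1.1 N := hwN
      exact chain_below hN m hm
    · intro i
      rw [hwu]
      show |KGraph.frac (w₀.1.2) i - (canonLim w₀).1.2 i| < η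
      have : KGraph.frac (w₀.1.2) i - (canonLim w₀).1.2 i = 0 := by
        rw [canonLim_snd]
        ring
      rw [this]
      simpa using hη
  refine ⟨(fun y' : RealLim Λs ps => y'.1 N) ⁻¹'
    (Quotient.mk ((Λs N).ptSetoid) '' What ps V N), ?_, ?_, ?_⟩
  · rintro y' hy'
    obtain ⟨z', hz'W, hz'⟩ := hy'
    have hz2 : Quotient.mk ((Λs N).ptSetoid) z' = y'.1 N := hz'
    refine ⟨(limEquiv Λs ps).symm y', ?_, (limEquiv Λs ps).apply_symm_apply y'⟩
    have hsymm : (limEquiv Λs ps).symm y' = Quotient.mk (limSetoid Λs ps) (backChain y') := rfl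
    show (limEquiv Λs ps).symm y' ∈ U
    rw [hsymm]
    show backChain y' ∈ V
    apply hz'W (backChain y')
    · show ((Λs N).classCanon (y'.1 N)).1 = _
      rw [← hz2, (Λs N).classCanon_mk]
      rfl
    · show ((Λs 0).classCanon (y'.1 0)).2.1 = KGraph.frac z'.2.1
      rw [← backChain_snd_eq y' N, ← hz2, (Λs N).classCanon_mk]
      rfl
  · apply IsOpen.preimage
    · exact (continuous_apply N).comp continuous_subtype_val
    · exact isOpen_mk_image (What_open hfin hVopen hsat N) (fun p q h => What_sat h)
  · rw [Set.mem_preimage]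
    have hfw : limEquiv Λs ps ξ = fwd w₀ := by
      rw [← hw₀]
      rfl
    rw [hfw]
    exact ⟨levelPt w₀ N, hzW, rfl⟩

/-- The homeomorphism. -/
noncomputable def limHomeo
    (hfin : ∀ n (b : (Λs n).Mor), { a | (ps n).toFun a = b }.Finite) :
    LimReal Λs ps ≃ₜ RealLim Λs ps where
  toEquiv := limEquiv Λs ps
  continuous_toFun := continuous_limEquiv
  continuous_invFun := continuous_limEquiv_symm hfin

end Assemble

theorem realization_of_projective_limit'
    {k : ℕ} (Λs : ℕ → KGraph k) (ps : ∀ n, KGraphHom (Λs (n + 1)) (Λs n))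
    (hrow : ∀ n, (Λs n).RowFiniteNoSources)
    (hcov : ∀ n, (ps n).IsCovering)
    (hfin : ∀ n (b : (Λs n).Mor), { a | (ps n).toFun a = b }.Finite) :
    ∃ h : LimReal Λs ps ≃ₜ RealLim Λs ps,
      ∀ (f : ∀ n, (Λs n).Mor) (hf : ∀ n, (ps n).toFun (f (n + 1)) = f n)
        (t : Fin k → ℝ)
        (ht : ∀ i, 0 ≤ t i ∧ t i ≤ ((Λs 0).deg (f 0) i : ℝ))
        (htn : ∀ n i, 0 ≤ t i ∧ t i ≤ ((Λs n).deg (f n) i : ℝ))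
        (hcomp : ∀ n, (ps n).real
            ((Λs (n + 1)).pt (f (n + 1)) t (htn (n + 1))) =
          (Λs n).pt (f n) t (htn n)),
        h (limPt Λs ps f hf t ht) = ⟨fun n => (Λs n).pt (f n) t (htn n), hcomp⟩ := by
  refine ⟨limHomeo hfin, ?_⟩
  intro f hf t ht htn hcomp
  apply Subtype.ext
  funext n
  show Quotient.mk ((Λs n).ptSetoid) (levelPt ⟨(f, t), hf, ht⟩ n) = (Λs n).pt (f n) t (htn n)
  exact congrArg _ (KGraph.points_ext rfl rfl)


/-- Given row-finite `k`-graphs `Λ_n` with no sources and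
finite-to-one coverings `p_n : Λ_n → Λ_{n-1}`, there is a homeomorphism
`π̃_∞ : X_{lim←(Λ_n,p_n)} → lim←(X_{Λ_n}, p̃_n)` satisfying
`π̃_∞([(λ_i)_i, t]) = ([λ_i, t])_i`. -/
theorem realization_of_projective_limit
    {k : ℕ} (Λs : ℕ → KGraph k) (ps : ∀ n, KGraphHom (Λs (n + 1)) (Λs n))
    (hrow : ∀ n, (Λs n).RowFiniteNoSources)
    (hcov : ∀ n, (ps n).IsCovering)
    (hfin : ∀ n (b : (Λs n).Mor), { a | (ps n).toFun a = b }.Finite) :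
    ∃ h : LimReal Λs ps ≃ₜ RealLim Λs ps,
      ∀ (f : ∀ n, (Λs n).Mor) (hf : ∀ n, (ps n).toFun (f (n + 1)) = f n)
        (t : Fin k → ℝ)
        (ht : ∀ i, 0 ≤ t i ∧ t i ≤ ((Λs 0).deg (f 0) i : ℝ))
        (htn : ∀ n i, 0 ≤ t i ∧ t i ≤ ((Λs n).deg (f n) i : ℝ))
        (hcomp : ∀ n, (ps n).real
            ((Λs (n + 1)).pt (f (n + 1)) t (htn (n + 1))) =
          (Λs n).pt (f n) t (htn n)),
        h (limPt Λs ps f hf t ht) = ⟨fun n => (Λs n).pt (f n) t (htn n), hcomp⟩ :=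
  realization_of_projective_limit' Λs ps hrow hcov hfin
end

section
/- Let Λ be a k-graph and α an action of ℤ^l on Λ by k-graph automorphisms, and let α̃ be the induced action of ℤ^l on the topological realization X_Λ by homeomorphisms (α̃_m([λ,t]) = [α_m(λ),t]). Then there is a homeomorphism φ from the mapping torus M(α̃) onto the topological realization X_{Λ ×_α ℤ^l} of the crossed-product (k+l)-graph, determined by φ([[λ,s],t]_{M(α̃)}) = [(λ,⌈t⌉),(s,t)] whenever t ≥ 0, where ℝ^{k+l} is identified with ℝ^k × ℝ^l. -/
section CrossedProduct

variable {k l : ℕ}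

/-- The mapping torus `M(σ) = (X × ℝˡ)/(σ × lt)` of an action `σ` of `ℤˡ` on a
topological space `X` by homeomorphisms (here given by an action of `ℤˡ` on a
`k`-graph, realized on `X = X_Λ`): the orbit space of the action
`(σ × lt)_m(x,t) = (σ_m(x), m + t)`. -/
def MappingTorusKGraph (Λ : KGraph k) (α : (Fin l → ℤ) → KGraphHom Λ Λ) : Type :=
  Quot (fun x y : Λ.Real × (Fin l → ℝ) => ∃ m : Fin l → ℤ,
    y.1 = (α m).real x.1 ∧ y.2 = (fun j => (m j : ℝ)) + x.2)

noncomputable instance (Λ : KGraph k) (α : (Fin l → ℤ) → KGraphHom Λ Λ) :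
    TopologicalSpace (MappingTorusKGraph Λ α) :=
  inferInstanceAs (TopologicalSpace (Quot _))

/-- An identification of a `(k+l)`-graph `C` with the crossed product
`Λ ×_α ℤˡ` of a `k`-graph `Λ` by an action `α` of `ℤˡ`: as a set
`Λ ×_α ℤˡ = Λ × ℕˡ`, with `d(λ,m) = (d(λ), m)`, `r(λ,m) = (r(λ),0)`,
`s(λ,m) = (α_{-m}(s(λ)), 0)` and `(λ,m)(μ,n) = (λ·α_m(μ), m+n)`. -/
structure IsCrossedProduct (Λ : KGraph k) (α : (Fin l → ℤ) → KGraphHom Λ Λ)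
    (C : KGraph (k + l)) where
  e : C.Mor ≃ Λ.Mor × (Fin l → ℕ)
  deg_eq : ∀ c, C.deg c = Fin.append (Λ.deg (e c).1) (e c).2
  rng_eq : ∀ c, e (C.rng c) = (Λ.rng (e c).1, 0)
  src_eq : ∀ c, e (C.src c) =
    ((α (fun j => -((e c).2 j : ℤ))).toFun (Λ.src (e c).1), 0)
  comp_eq : ∀ c d, C.src c = C.rng d →
    e (C.comp c d) =
      (Λ.comp (e c).1 ((α (fun j => ((e c).2 j : ℤ))).toFun (e d).1),
        (e c).2 + (e d).2)

section SegLemmas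

variable {k : ℕ} (Λ : KGraph k)

theorem KGraph.seg_eq_s18 {a x b y : Λ.Mor} {m n : Fin k → ℕ}
    (hx : Λ.deg x = m) (hb : Λ.deg b = n - m)
    (hsx : Λ.src x = Λ.rng b) (hsb : Λ.src b = Λ.rng y)
    (ha : a = Λ.comp x (Λ.comp b y)) :
    Λ.seg a m n = b := by
  have hcond : ∃ b' : Λ.Mor, Λ.deg b' = n - m ∧ ∃ x' y' : Λ.Mor,
      Λ.deg x' = m ∧ Λ.src x' = Λ.rng b' ∧ Λ.src b' = Λ.rng y' ∧
      a = Λ.comp x' (Λ.comp b' y') := ⟨b, hb, x, y, hx, hsx, hsb, ha⟩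
  have hseg : Λ.seg a m n = hcond.choose := by
    simp only [KGraph.seg]; rw [dif_pos hcond]
  obtain ⟨hb', x', y', hx', hsx', hsb', ha'⟩ := hcond.choose_spec
  set b' := hcond.choose with hb'def
  have hdy : Λ.deg (Λ.comp b y) = (n - m) + Λ.deg y := by
    rw [Λ.deg_comp b y hsb, hb]
  have hdy' : Λ.deg (Λ.comp b' y') = (n - m) + Λ.deg y' := by
    rw [Λ.deg_comp b' y' hsb', hb']
  have hsx2 : Λ.src x = Λ.rng (Λ.comp b y) := by rw [Λ.rng_comp b y hsb]; exact hsx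
  have hsx2' : Λ.src x' = Λ.rng (Λ.comp b' y') := by rw [Λ.rng_comp b' y' hsb']; exact hsx'
  have hda : Λ.deg a = m + ((n - m) + Λ.deg y) := by
    rw [ha, Λ.deg_comp _ _ hsx2, hx, hdy]
  have hda' : Λ.deg a = m + ((n - m) + Λ.deg y') := by
    rw [ha', Λ.deg_comp _ _ hsx2', hx', hdy']
  have hyy' : Λ.deg y' = Λ.deg y := by
    funext i
    have h1 := congrFun (hda.symm.trans hda') i
    simp only [Pi.add_apply] at h1
    omega
  obtain ⟨P, hP, hPuniq⟩ := Λ.factor a m ((n - m) + Λ.deg y) hda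
  have h1 : (x, Λ.comp b y) = P := hPuniq _ ⟨hx, hdy, hsx2, ha.symm⟩
  have h2 : (x', Λ.comp b' y') = P := by
    refine hPuniq _ ⟨hx', ?_, hsx2', ha'.symm⟩
    rw [hdy', hyy']
  have hz : Λ.comp b y = Λ.comp b' y' := by
    have := h1.trans h2.symm
    exact (congrArg Prod.snd this)
  obtain ⟨Q, hQ, hQuniq⟩ := Λ.factor (Λ.comp b y) (n - m) (Λ.deg y) hdy
  have h3 : (b, y) = Q := hQuniq _ ⟨hb, rfl, hsb, rfl⟩
  have h4 : (b', y') = Q := by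
    refine hQuniq _ ⟨hb', hyy', hsb', hz.symm⟩
  rw [hseg]
  have := h4.trans h3.symm
  exact congrArg Prod.fst this

theorem KGraph.exists_decomp (a : Λ.Mor) (m n : Fin k → ℕ)
    (hmn : ∀ i, m i ≤ n i) (hn : ∀ i, n i ≤ Λ.deg a i) :
    ∃ x b y, Λ.deg x = m ∧ Λ.deg b = n - m ∧ Λ.deg y = Λ.deg a - n ∧
      Λ.src x = Λ.rng b ∧ Λ.src b = Λ.rng y ∧ a = Λ.comp x (Λ.comp b y) := by
  have h1 : Λ.deg a = m + (Λ.deg a - m) := by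
    funext i; simp only [Pi.add_apply, Pi.sub_apply]
    have := hmn i; have := hn i; omega
  obtain ⟨⟨x, z⟩, ⟨hx, hz, hsxz, hcomp⟩, -⟩ := Λ.factor a m (Λ.deg a - m) h1
  have h2 : Λ.deg z = (n - m) + (Λ.deg a - n) := by
    rw [hz]; funext i; simp only [Pi.add_apply, Pi.sub_apply]
    have := hmn i; have := hn i; omega
  obtain ⟨⟨b, y⟩, ⟨hbb, hy, hsby, hcompz⟩, -⟩ := Λ.factor z (n - m) (Λ.deg a - n) h2
  refine ⟨x, b, y, hx, hbb, hy, ?_, hsby, ?_⟩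
  · rw [← hcompz] at hsxz; rwa [Λ.rng_comp b y hsby] at hsxz
  · rw [← hcomp, ← hcompz]

/-- If no factorization exists, `seg` is junk. -/
theorem KGraph.seg_neg {a : Λ.Mor} {m n : Fin k → ℕ}
    (h : ¬ ∃ b : Λ.Mor, Λ.deg b = n - m ∧ ∃ x y : Λ.Mor,
      Λ.deg x = m ∧ Λ.src x = Λ.rng b ∧ Λ.src b = Λ.rng y ∧
      a = Λ.comp x (Λ.comp b y)) :
    Λ.seg a m n = a := by
  simp only [KGraph.seg]; rw [dif_neg h]

end SegLemmas
section AppendLemmas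

variable {k l : ℕ}

theorem append_comp' {β γ : Type*} (g : β → γ) (s : Fin k → β) (t : Fin l → β) :
    (fun i => g (Fin.append s t i)) = Fin.append (fun i => g (s i)) (fun j => g (t j)) := by
  funext i
  refine Fin.addCases (fun i => ?_) (fun j => ?_) i <;>
    simp [Fin.append_left, Fin.append_right]

theorem append_eta (u : Fin (k + l) → ℝ) :
    Fin.append (fun i => u (Fin.castAdd l i)) (fun j => u (Fin.natAdd k j)) = u := by
  funext i
  refine Fin.addCases (fun i => ?_) (fun j => ?_) i <;>
    simp [Fin.append_left, Fin.append_right]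

theorem fl_append (s : Fin k → ℝ) (t : Fin l → ℝ) :
    KGraph.fl (Fin.append s t) = Fin.append (KGraph.fl s) (KGraph.fl t) :=
  append_comp' (fun x : ℝ => (⌊x⌋).toNat) s t

theorem ce_append (s : Fin k → ℝ) (t : Fin l → ℝ) :
    KGraph.ce (Fin.append s t) = Fin.append (KGraph.ce s) (KGraph.ce t) :=
  append_comp' (fun x : ℝ => (⌈x⌉).toNat) s t

theorem frac_append (s : Fin k → ℝ) (t : Fin l → ℝ) :
    KGraph.frac (Fin.append s t) = Fin.append (KGraph.frac s) (KGraph.frac t) :=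
  append_comp' (fun x : ℝ => x - ((⌊x⌋).toNat : ℝ)) s t

theorem append_sub (a b : Fin k → ℕ) (c d : Fin l → ℕ) :
    Fin.append a c - Fin.append b d = Fin.append (a - b) (c - d) := by
  funext i
  refine Fin.addCases (fun i => ?_) (fun j => ?_) i <;>
    simp [Fin.append_left, Fin.append_right, Pi.sub_apply]

theorem append_add' (a b : Fin k → ℕ) (c d : Fin l → ℕ) :
    Fin.append a c + Fin.append b d = Fin.append (a + b) (c + d) := by
  funext i
  refine Fin.addCases (fun i => ?_) (fun j => ?_) i <;>
    simp [Fin.append_left, Fin.append_right, Pi.add_apply]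

-- floor/ceil toNat facts
theorem le_ceil_toNat {x : ℝ} : x ≤ ((⌈x⌉.toNat : ℕ) : ℝ) :=
  le_trans (Int.le_ceil x) (by exact_mod_cast Int.self_le_toNat _)

theorem fl_le_ce_toNat {x : ℝ} : (⌊x⌋).toNat ≤ (⌈x⌉).toNat :=
  Int.toNat_le_toNat (Int.floor_le_ceil x)

theorem ce_toNat_le {x : ℝ} {d : ℕ} (h : x ≤ (d : ℝ)) : (⌈x⌉).toNat ≤ d := by
  rw [Int.toNat_le]
  exact_mod_cast Int.ceil_le.mpr (by exact_mod_cast h)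

theorem toNat_floor_le {x : ℝ} (hx : 0 ≤ x) : ((⌊x⌋.toNat : ℕ) : ℝ) ≤ x := by
  have h1 : ((⌊x⌋.toNat : ℤ) : ℝ) ≤ x := by
    rw [Int.toNat_of_nonneg (Int.floor_nonneg.mpr hx)]
    exact Int.floor_le x
  exact_mod_cast h1

end AppendLemmas
section AlphaLemmas

variable {k l : ℕ} {Λ : KGraph k} {α : (Fin l → ℤ) → KGraphHom Λ Λ}

theorem alpha_add_apply (hαadd : ∀ m n : Fin l → ℤ, α (m + n) = (α m).comp (α n))
    (m n : Fin l → ℤ) (a : Λ.Mor) :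
    (α m).toFun ((α n).toFun a) = (α (m + n)).toFun a := by
  rw [hαadd m n]; rfl

theorem alpha_zero_apply (hα0 : α 0 = KGraphHom.id Λ) (a : Λ.Mor) :
    (α 0).toFun a = a := by rw [hα0]; rfl

theorem alpha_inv_apply (hα0 : α 0 = KGraphHom.id Λ)
    (hαadd : ∀ m n : Fin l → ℤ, α (m + n) = (α m).comp (α n))
    (m : Fin l → ℤ) (a : Λ.Mor) :
    (α m).toFun ((α (-m)).toFun a) = a := by
  rw [alpha_add_apply hαadd, add_neg_cancel, alpha_zero_apply hα0]

/-- automorphisms commute with `seg`. -/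
theorem alpha_seg (hα0 : α 0 = KGraphHom.id Λ)
    (hαadd : ∀ m n : Fin l → ℤ, α (m + n) = (α m).comp (α n))
    (m : Fin l → ℤ) (a : Λ.Mor) (u v : Fin k → ℕ) :
    Λ.seg ((α m).toFun a) u v = (α m).toFun (Λ.seg a u v) := by
  classical
  by_cases h : ∃ b : Λ.Mor, Λ.deg b = v - u ∧ ∃ x y : Λ.Mor,
      Λ.deg x = u ∧ Λ.src x = Λ.rng b ∧ Λ.src b = Λ.rng y ∧
      a = Λ.comp x (Λ.comp b y)
  · -- get the decomposition realizing `seg a u v`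
    have hseg : Λ.seg a u v = h.choose := by
      simp only [KGraph.seg]; rw [dif_pos h]
    obtain ⟨hdb, x, y, hdx, hsx, hsb, ha⟩ := h.choose_spec
    set b := h.choose
    -- map it through α m
    have hsx' : Λ.src ((α m).toFun x) = Λ.rng ((α m).toFun b) := by
      rw [← (α m).map_src, ← (α m).map_rng, hsx]
    have hsb' : Λ.src ((α m).toFun b) = Λ.rng ((α m).toFun y) := by
      rw [← (α m).map_src, ← (α m).map_rng, hsb]
    have ha' : (α m).toFun a = Λ.comp ((α m).toFun x)
        (Λ.comp ((α m).toFun b) ((α m).toFun y)) := by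
      rw [ha, (α m).map_comp x (Λ.comp b y) (by rw [Λ.rng_comp b y hsb]; exact hsx),
        (α m).map_comp b y hsb]
    have := Λ.seg_eq_s18 (a := (α m).toFun a) (x := (α m).toFun x) (b := (α m).toFun b)
      (y := (α m).toFun y) (m := u) (n := v)
      (by rw [(α m).map_deg, hdx]) (by rw [(α m).map_deg, hdb]) hsx' hsb' ha'
    rw [this, hseg]
  · -- no decomposition on either side
    have h' : ¬ ∃ b : Λ.Mor, Λ.deg b = v - u ∧ ∃ x y : Λ.Mor,
        Λ.deg x = u ∧ Λ.src x = Λ.rng b ∧ Λ.src b = Λ.rng y ∧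
        (α m).toFun a = Λ.comp x (Λ.comp b y) := by
      rintro ⟨b, hdb, x, y, hdx, hsx, hsb, ha⟩
      refine h ⟨(α (-m)).toFun b, by rw [(α (-m)).map_deg, hdb],
        (α (-m)).toFun x, (α (-m)).toFun y,
        by rw [(α (-m)).map_deg, hdx],
        by rw [← (α (-m)).map_src, ← (α (-m)).map_rng, hsx],
        by rw [← (α (-m)).map_src, ← (α (-m)).map_rng, hsb], ?_⟩
      have : a = (α (-m)).toFun ((α m).toFun a) := by
        rw [alpha_add_apply hαadd, neg_add_cancel, alpha_zero_apply hα0]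
      rw [this, ha, (α (-m)).map_comp x (Λ.comp b y)
          (by rw [Λ.rng_comp b y hsb]; exact hsx),
        (α (-m)).map_comp b y hsb]
    rw [Λ.seg_neg h, Λ.seg_neg h']

theorem pointMap_rel (hα0 : α 0 = KGraphHom.id Λ)
    (hαadd : ∀ m n : Fin l → ℤ, α (m + n) = (α m).comp (α n))
    (m : Fin l → ℤ) {p q : Λ.Points} (h : Λ.ptRel p q) :
    Λ.ptRel ((α m).pointMap p) ((α m).pointMap q) := by
  obtain ⟨h1, h2⟩ := h
  unfold KGraph.ptRel KGraphHom.pointMap at *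
  refine ⟨?_, h2⟩
  simp only
  rw [alpha_seg hα0 hαadd, alpha_seg hα0 hαadd, h1]

theorem real_mk (hα0 : α 0 = KGraphHom.id Λ)
    (hαadd : ∀ m n : Fin l → ℤ, α (m + n) = (α m).comp (α n))
    (m : Fin l → ℤ) (p : Λ.Points) :
    (α m).real (Quotient.mk Λ.ptSetoid p) =
      Quotient.mk Λ.ptSetoid ((α m).pointMap p) := by
  show Quotient.mk Λ.ptSetoid ((α m).pointMap (Quotient.out _)) = _
  refine Quot.sound ?_
  have h : Λ.ptRel (Quotient.out (Quotient.mk Λ.ptSetoid p)) p :=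
    Quotient.exact (Quotient.out_eq (Quotient.mk Λ.ptSetoid p))
  exact pointMap_rel hα0 hαadd m h

/-- the basic shift relation in the mapping torus. -/
theorem torus_shift (hα0 : α 0 = KGraphHom.id Λ)
    (hαadd : ∀ m n : Fin l → ℤ, α (m + n) = (α m).comp (α n))
    (m : Fin l → ℤ) (p : Λ.Points) (t : Fin l → ℝ) :
    (Quot.mk _ (Quotient.mk Λ.ptSetoid p, t) : MappingTorusKGraph Λ α) =
      Quot.mk _ (Quotient.mk Λ.ptSetoid ((α m).pointMap p),
        (fun j => ((m j : ℤ) : ℝ)) + t) := by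
  refine Quot.sound ⟨m, ?_, rfl⟩
  exact (real_mk hα0 hαadd m p).symm

end AlphaLemmas
section SegCLemma

variable {k l : ℕ} {Λ : KGraph k} {α : (Fin l → ℤ) → KGraphHom Λ Λ}
  {C : KGraph (k + l)}

theorem segC (hα0 : α 0 = KGraphHom.id Λ)
    (hαadd : ∀ m n : Fin l → ℤ, α (m + n) = (α m).comp (α n))
    (hC : IsCrossedProduct Λ α C)
    (b : Λ.Mor) (n : Fin l → ℕ) (s : Fin k → ℝ) (t : Fin l → ℝ)
    (hs : ∀ i, 0 ≤ s i ∧ s i ≤ (Λ.deg b i : ℝ))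
    (ht0 : ∀ j, 0 ≤ t j) (htn : ∀ j, t j ≤ (n j : ℝ)) :
    C.seg (hC.e.symm (b, n)) (KGraph.fl (Fin.append s t)) (KGraph.ce (Fin.append s t))
      = hC.e.symm ((α (fun j => -(KGraph.fl t j : ℤ))).toFun
          (Λ.seg b (KGraph.fl s) (KGraph.ce s)), KGraph.ce t - KGraph.fl t) := by
  have hfs_le : ∀ i, KGraph.fl s i ≤ KGraph.ce s i := fun i => fl_le_ce_toNat
  have hcs_le : ∀ i, KGraph.ce s i ≤ Λ.deg b i := fun i => ce_toNat_le (hs i).2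
  have hft_le : ∀ j, KGraph.fl t j ≤ KGraph.ce t j := fun j => fl_le_ce_toNat
  have hct_le : ∀ j, KGraph.ce t j ≤ n j := fun j => ce_toNat_le (htn j)
  obtain ⟨x, b₀, y, hdx, hdb₀, hdy, hsx, hsb, hbdec⟩ :=
    Λ.exists_decomp b (KGraph.fl s) (KGraph.ce s) hfs_le hcs_le
  have hseg : Λ.seg b (KGraph.fl s) (KGraph.ce s) = b₀ :=
    Λ.seg_eq_s18 hdx hdb₀ hsx hsb hbdec
  -- the three pieces in C
  set nF : Fin l → ℤ := fun j => -(KGraph.fl t j : ℤ) with hnF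
  set nC : Fin l → ℤ := fun j => -(KGraph.ce t j : ℤ) with hnC
  set X : C.Mor := hC.e.symm (x, KGraph.fl t) with hX
  set B : C.Mor := hC.e.symm ((α nF).toFun b₀, KGraph.ce t - KGraph.fl t) with hB
  set Y : C.Mor := hC.e.symm ((α nC).toFun y, n - KGraph.ce t) with hY
  have heX : hC.e X = (x, KGraph.fl t) := hC.e.apply_symm_apply _
  have heB : hC.e B = ((α nF).toFun b₀, KGraph.ce t - KGraph.fl t) :=
    hC.e.apply_symm_apply _
  have heY : hC.e Y = ((α nC).toFun y, n - KGraph.ce t) := hC.e.apply_symm_apply _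
  -- source/range matching
  have hsrcX : C.src X = C.rng B := by
    apply hC.e.injective
    rw [hC.src_eq X, hC.rng_eq B, heX, heB]
    simp only
    rw [← (α nF).map_rng, hsx]
  have hsrcB : C.src B = C.rng Y := by
    apply hC.e.injective
    rw [hC.src_eq B, hC.rng_eq Y, heB, heY]
    simp only
    rw [← (α nC).map_rng, ← (α nF).map_src]
    rw [alpha_add_apply hαadd]
    have hexp : (fun j => -(((KGraph.ce t - KGraph.fl t)) j : ℤ)) + nF = nC := by
      funext j
      simp only [Pi.add_apply, Pi.sub_apply, hnF, hnC]
      have := hft_le j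
      push_cast [Nat.cast_sub this]
      ring
    rw [hexp, hsb]
  have hcompBY : hC.e (C.comp B Y) =
      ((α nF).toFun (Λ.comp b₀ y), n - KGraph.fl t) := by
    rw [hC.comp_eq B Y hsrcB, heB, heY]
    simp only
    rw [alpha_add_apply hαadd]
    have hexp : (fun j => (((KGraph.ce t - KGraph.fl t)) j : ℤ)) + nC = nF := by
      funext j
      simp only [Pi.add_apply, Pi.sub_apply, hnF, hnC]
      have := hft_le j
      push_cast [Nat.cast_sub this]
      ring
    rw [hexp, ← (α nF).map_comp b₀ y hsb]
    have harith : (KGraph.ce t - KGraph.fl t) + (n - KGraph.ce t) = n - KGraph.fl t := by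
      funext j
      simp only [Pi.add_apply, Pi.sub_apply]
      have := hft_le j; have := hct_le j; omega
    rw [harith]
  have hsrcX2 : C.src X = C.rng (C.comp B Y) := by
    apply hC.e.injective
    rw [hC.src_eq X, hC.rng_eq _, hcompBY, heX]
    simp only
    rw [← (α nF).map_rng, Λ.rng_comp b₀ y hsb, hsx]
  have hcompX : C.comp X (C.comp B Y) = hC.e.symm (b, n) := by
    apply hC.e.injective
    rw [hC.comp_eq X _ hsrcX2, heX, hcompBY, hC.e.apply_symm_apply]
    simp only
    rw [alpha_add_apply hαadd]
    have hexp : (fun j => ((KGraph.fl t) j : ℤ)) + nF = 0 := by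
      funext j; simp only [Pi.add_apply, hnF, Pi.zero_apply]; ring
    rw [hexp, alpha_zero_apply hα0, ← hbdec]
    have harith : KGraph.fl t + (n - KGraph.fl t) = n := by
      funext j
      simp only [Pi.add_apply, Pi.sub_apply]
      have := hft_le j; have := hct_le j; omega
    rw [harith]
  -- degrees
  have hdX : C.deg X = KGraph.fl (Fin.append s t) := by
    rw [hC.deg_eq X, heX]
    simp only
    rw [hdx, fl_append]
  have hdB : C.deg B = KGraph.ce (Fin.append s t) - KGraph.fl (Fin.append s t) := by
    rw [hC.deg_eq B, heB]
    simp only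
    rw [(α nF).map_deg, hdb₀, ce_append, fl_append, append_sub]
  have := C.seg_eq_s18 hdX hdB hsrcX hsrcB hcompX.symm
  rw [this, hB, hseg]

end SegCLemma
section FRaw

variable {k l : ℕ} {Λ : KGraph k} {α : (Fin l → ℤ) → KGraphHom Λ Λ}
  {C : KGraph (k + l)}

@[simp] theorem fl_apply (t : Fin l → ℝ) (j : Fin l) :
    KGraph.fl t j = (⌊t j⌋).toNat := rfl
@[simp] theorem ce_apply (t : Fin l → ℝ) (j : Fin l) :
    KGraph.ce t j = (⌈t j⌉).toNat := rfl
@[simp] theorem frac_apply (t : Fin l → ℝ) (j : Fin l) :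
    KGraph.frac t j = t j - ((⌊t j⌋).toNat : ℝ) := rfl

theorem toNat_cast_real {a : ℤ} (h : 0 ≤ a) : ((a.toNat : ℕ) : ℝ) = (a : ℝ) := by
  rw [← Int.cast_natCast, Int.toNat_of_nonneg h]

theorem KGraph.pt_congr {k' : ℕ} (G : KGraph k') {a b : G.Mor} {t u : Fin k' → ℝ}
    (hab : a = b) (htu : t = u)
    {h : ∀ i, 0 ≤ t i ∧ t i ≤ (G.deg a i : ℝ)} {h' : ∀ i, 0 ≤ u i ∧ u i ≤ (G.deg b i : ℝ)} :
    G.pt a t h = G.pt b u h' := by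
  subst hab; subst htu; rfl

theorem pt_bound (hC : IsCrossedProduct Λ α C) {b' : Λ.Mor} {n' : Fin l → ℕ}
    {s : Fin k → ℝ} {t' : Fin l → ℝ}
    (hs : ∀ i, 0 ≤ s i ∧ s i ≤ (Λ.deg b' i : ℝ))
    (ht : ∀ j, 0 ≤ t' j ∧ t' j ≤ (n' j : ℝ)) :
    ∀ i, 0 ≤ Fin.append s t' i ∧
      Fin.append s t' i ≤ (C.deg (hC.e.symm (b', n')) i : ℝ) := by
  intro i
  have hdeg : C.deg (hC.e.symm (b', n')) = Fin.append (Λ.deg b') n' := by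
    rw [hC.deg_eq, hC.e.apply_symm_apply]
  rw [hdeg]
  refine Fin.addCases (fun i => ?_) (fun j => ?_) i
  · simpa [Fin.append_left] using hs i
  · simpa [Fin.append_right] using ht j

/-- The forward map on raw data. -/
noncomputable def fRaw (hC : IsCrossedProduct Λ α C) (p : Λ.Points) (t : Fin l → ℝ) :
    C.Real :=
  C.pt (hC.e.symm ((α (fun j => -⌊t j⌋)).toFun p.1,
      KGraph.ce (fun j => t j - (⌊t j⌋ : ℝ))))
    (Fin.append p.2.1 (fun j => t j - (⌊t j⌋ : ℝ)))
    (pt_bound hC (fun i => by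
        rw [(α (fun j => -⌊t j⌋)).map_deg]; exact p.2.2 i)
      (fun j => ⟨by simp [Int.floor_le], le_ceil_toNat⟩))

/-- Lemma C: the forward map sends a point to the expected class, for any
integral shift `z` and any size `n`. -/
theorem fRaw_eq (hα0 : α 0 = KGraphHom.id Λ)
    (hαadd : ∀ m n : Fin l → ℤ, α (m + n) = (α m).comp (α n))
    (hC : IsCrossedProduct Λ α C)
    (a : Λ.Mor) (s : Fin k → ℝ) (hs : ∀ i, 0 ≤ s i ∧ s i ≤ (Λ.deg a i : ℝ))
    (t : Fin l → ℝ) (z : Fin l → ℤ) (n : Fin l → ℕ)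
    (hz0 : ∀ j, 0 ≤ t j - (z j : ℝ)) (hzn : ∀ j, t j - (z j : ℝ) ≤ (n j : ℝ)) :
    fRaw hC ⟨a, ⟨s, hs⟩⟩ t =
      C.pt (hC.e.symm ((α (-z)).toFun a, n)) (Fin.append s (fun j => t j - (z j : ℝ)))
        (pt_bound hC (fun i => by rw [(α (-z)).map_deg]; exact hs i)
          (fun j => ⟨hz0 j, hzn j⟩)) := by
  have hzf : ∀ j, z j ≤ ⌊t j⌋ := fun j =>
    Int.le_floor.mpr (by linarith [hz0 j])
  have hflc : ∀ j, ⌊t j⌋ ≤ ⌈t j⌉ := fun j => Int.floor_le_ceil _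
  show Quotient.mk C.ptSetoid _ = Quotient.mk C.ptSetoid _
  apply Quot.sound
  have hs1 : ∀ i, 0 ≤ s i ∧ s i ≤ (Λ.deg ((α (fun j => -⌊t j⌋)).toFun a) i : ℝ) := by
    intro i; rw [(α (fun j => -⌊t j⌋)).map_deg]; exact hs i
  have hs2 : ∀ i, 0 ≤ s i ∧ s i ≤ (Λ.deg ((α (-z)).toFun a) i : ℝ) := by
    intro i; rw [(α (-z)).map_deg]; exact hs i
  have ht0' : ∀ j, 0 ≤ t j - ((⌊t j⌋ : ℤ) : ℝ) := fun j => by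
    simp [Int.floor_le]
  have htn' : ∀ j, t j - ((⌊t j⌋ : ℤ) : ℝ) ≤
      ((KGraph.ce (fun j => t j - ((⌊t j⌋ : ℤ) : ℝ)) j : ℕ) : ℝ) := fun j => le_ceil_toNat
  constructor
  · -- the `seg` component
    show C.seg (hC.e.symm _)
        (KGraph.fl (Fin.append s (fun j => t j - ((⌊t j⌋ : ℤ) : ℝ))))
        (KGraph.ce (Fin.append s (fun j => t j - ((⌊t j⌋ : ℤ) : ℝ)))) =
      C.seg (hC.e.symm _)
        (KGraph.fl (Fin.append s (fun j => t j - ((z j : ℤ) : ℝ))))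
        (KGraph.ce (Fin.append s (fun j => t j - ((z j : ℤ) : ℝ))))
    rw [segC hα0 hαadd hC _ _ _ _ hs1 ht0' htn', segC hα0 hαadd hC _ _ _ _ hs2 hz0 hzn]
    rw [alpha_seg hα0 hαadd, alpha_seg hα0 hαadd, alpha_add_apply hαadd,
      alpha_add_apply hαadd]
    have hexp : ((fun j => -(KGraph.fl (fun j => t j - ((⌊t j⌋ : ℤ) : ℝ)) j : ℤ)) +
          fun j => -⌊t j⌋) =
        ((fun j => -(KGraph.fl (fun j => t j - ((z j : ℤ) : ℝ)) j : ℤ)) + -z) := by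
      funext j
      simp only [Pi.add_apply, Pi.neg_apply, fl_apply]
      rw [Int.floor_sub_intCast, Int.floor_sub_intCast]
      have := hzf j
      omega
    rw [hexp]
    have hnn : (KGraph.ce (fun j => t j - ((⌊t j⌋ : ℤ) : ℝ)) -
          KGraph.fl (fun j => t j - ((⌊t j⌋ : ℤ) : ℝ))) =
        (KGraph.ce (fun j => t j - ((z j : ℤ) : ℝ)) -
          KGraph.fl (fun j => t j - ((z j : ℤ) : ℝ))) := by
      funext j
      simp only [Pi.sub_apply, fl_apply, ce_apply]
      rw [Int.floor_sub_intCast, Int.floor_sub_intCast, Int.ceil_sub_intCast, Int.ceil_sub_intCast]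
      have := hzf j; have := hflc j
      omega
    rw [hnn]
  · -- the `frac` component
    show KGraph.frac (Fin.append s (fun j => t j - ((⌊t j⌋ : ℤ) : ℝ))) =
      KGraph.frac (Fin.append s (fun j => t j - ((z j : ℤ) : ℝ)))
    rw [frac_append, frac_append]
    refine congrArg (Fin.append (KGraph.frac s)) ?_
    funext j
    simp only [frac_apply]
    rw [Int.floor_sub_intCast, Int.floor_sub_intCast]
    rw [toNat_cast_real (by have := hzf j; omega : (0:ℤ) ≤ ⌊t j⌋ - z j),
      toNat_cast_real (by omega : (0:ℤ) ≤ ⌊t j⌋ - ⌊t j⌋)]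
    push_cast
    ring

end FRaw
section FwdMap

variable {k l : ℕ} {Λ : KGraph k} {α : (Fin l → ℤ) → KGraphHom Λ Λ}
  {C : KGraph (k + l)}

/-- `fRaw` only depends on the class of the point. -/
theorem fRaw_rel (hα0 : α 0 = KGraphHom.id Λ)
    (hαadd : ∀ m n : Fin l → ℤ, α (m + n) = (α m).comp (α n))
    (hC : IsCrossedProduct Λ α C)
    {p q : Λ.Points} (h : Λ.ptRel p q) (t : Fin l → ℝ) :
    fRaw hC p t = fRaw hC q t := by
  obtain ⟨a, s, hsp⟩ := p
  obtain ⟨b, s', hsq⟩ := q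
  obtain ⟨h1, h2⟩ := h
  simp only at h1 h2
  have ht0' : ∀ j, 0 ≤ t j - ((⌊t j⌋ : ℤ) : ℝ) := fun j => by simp [Int.floor_le]
  have htn' : ∀ j, t j - ((⌊t j⌋ : ℤ) : ℝ) ≤
      ((KGraph.ce (fun j => t j - ((⌊t j⌋ : ℤ) : ℝ)) j : ℕ) : ℝ) := fun j => le_ceil_toNat
  have hs1 : ∀ i, 0 ≤ s i ∧ s i ≤ (Λ.deg ((α (fun j => -⌊t j⌋)).toFun a) i : ℝ) := by
    intro i; rw [(α (fun j => -⌊t j⌋)).map_deg]; exact hsp i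
  have hs2 : ∀ i, 0 ≤ s' i ∧ s' i ≤ (Λ.deg ((α (fun j => -⌊t j⌋)).toFun b) i : ℝ) := by
    intro i; rw [(α (fun j => -⌊t j⌋)).map_deg]; exact hsq i
  show Quotient.mk C.ptSetoid _ = Quotient.mk C.ptSetoid _
  apply Quot.sound
  constructor
  · show C.seg (hC.e.symm _)
        (KGraph.fl (Fin.append s (fun j => t j - ((⌊t j⌋ : ℤ) : ℝ))))
        (KGraph.ce (Fin.append s (fun j => t j - ((⌊t j⌋ : ℤ) : ℝ)))) =
      C.seg (hC.e.symm _)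
        (KGraph.fl (Fin.append s' (fun j => t j - ((⌊t j⌋ : ℤ) : ℝ))))
        (KGraph.ce (Fin.append s' (fun j => t j - ((⌊t j⌋ : ℤ) : ℝ))))
    rw [segC hα0 hαadd hC _ _ _ _ hs1 ht0' htn', segC hα0 hαadd hC _ _ _ _ hs2 ht0' htn']
    rw [alpha_seg hα0 hαadd, alpha_seg hα0 hαadd, h1]
  · show KGraph.frac (Fin.append s (fun j => t j - ((⌊t j⌋ : ℤ) : ℝ))) =
      KGraph.frac (Fin.append s' (fun j => t j - ((⌊t j⌋ : ℤ) : ℝ)))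
    rw [frac_append, frac_append, h2]

/-- `fRaw` is invariant under the torus shift. -/
theorem fRaw_shift (hα0 : α 0 = KGraphHom.id Λ)
    (hαadd : ∀ m n : Fin l → ℤ, α (m + n) = (α m).comp (α n))
    (hC : IsCrossedProduct Λ α C)
    (p : Λ.Points) (t : Fin l → ℝ) (m : Fin l → ℤ) :
    fRaw hC ((α m).pointMap p) ((fun j => ((m j : ℤ) : ℝ)) + t) = fRaw hC p t := by
  obtain ⟨a, s, hsp⟩ := p
  have hw' : (fun j => ((fun j => ((m j : ℤ) : ℝ)) + t) j -
      ((⌊((fun j => ((m j : ℤ) : ℝ)) + t) j⌋ : ℤ) : ℝ)) =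
      (fun j => t j - ((⌊t j⌋ : ℤ) : ℝ)) := by
    funext j
    simp only [Pi.add_apply, Int.floor_intCast_add]
    push_cast
    ring
  unfold fRaw
  refine KGraph.pt_congr C ?_ ?_
  · refine congrArg hC.e.symm (Prod.ext ?_ ?_)
    · show (α _).toFun ((α m).toFun a) = _
      rw [alpha_add_apply hαadd]
      have hexp : ((fun j => -⌊((fun j => ((m j : ℤ) : ℝ)) + t) j⌋) + m) =
          (fun j => -⌊t j⌋) := by
        funext j
        simp only [Pi.add_apply, Int.floor_intCast_add]
        ring
      rw [hexp]
    · exact congrArg KGraph.ce hw'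
  · exact congrArg (Fin.append s) hw'

end FwdMap
section Maps

variable {k l : ℕ} {Λ : KGraph k} {α : (Fin l → ℤ) → KGraphHom Λ Λ}
  {C : KGraph (k + l)}

/-- c-form of the `seg` computation. -/
theorem segC' (hα0 : α 0 = KGraphHom.id Λ)
    (hαadd : ∀ m n : Fin l → ℤ, α (m + n) = (α m).comp (α n))
    (hC : IsCrossedProduct Λ α C)
    (c : C.Mor) (u : Fin (k + l) → ℝ)
    (hu : ∀ i, 0 ≤ u i ∧ u i ≤ (C.deg c i : ℝ)) :
    C.seg c (KGraph.fl u) (KGraph.ce u) =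
      hC.e.symm ((α (fun j => -(KGraph.fl (fun j' => u (Fin.natAdd k j')) j : ℤ))).toFun
        (Λ.seg (hC.e c).1 (KGraph.fl (fun i => u (Fin.castAdd l i)))
          (KGraph.ce (fun i => u (Fin.castAdd l i)))),
        KGraph.ce (fun j' => u (Fin.natAdd k j')) -
          KGraph.fl (fun j' => u (Fin.natAdd k j'))) := by
  have hc : hC.e.symm ((hC.e c).1, (hC.e c).2) = c := by
    rw [Prod.mk.eta]; exact hC.e.symm_apply_apply c
  have hdeg : C.deg c = Fin.append (Λ.deg (hC.e c).1) (hC.e c).2 := hC.deg_eq c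
  have hs : ∀ i, 0 ≤ u (Fin.castAdd l i) ∧
      u (Fin.castAdd l i) ≤ (Λ.deg (hC.e c).1 i : ℝ) := by
    intro i
    have h := hu (Fin.castAdd l i)
    rwa [hdeg, Fin.append_left] at h
  have ht : ∀ j, 0 ≤ u (Fin.natAdd k j) ∧
      u (Fin.natAdd k j) ≤ ((hC.e c).2 j : ℝ) := by
    intro j
    have h := hu (Fin.natAdd k j)
    rwa [hdeg, Fin.append_right] at h
  conv_lhs => rw [← hc, ← append_eta u]
  exact segC hα0 hαadd hC _ _ _ _ hs (fun j => (ht j).1) (fun j => (ht j).2)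

/-- The forward map `M(α̃) → X_C`. -/
noncomputable def phiFwd (hα0 : α 0 = KGraphHom.id Λ)
    (hαadd : ∀ m n : Fin l → ℤ, α (m + n) = (α m).comp (α n))
    (hC : IsCrossedProduct Λ α C) : MappingTorusKGraph Λ α → C.Real :=
  Quot.lift (fun x : Λ.Real × (Fin l → ℝ) =>
    Quotient.lift (fun p => fRaw hC p x.2)
      (fun p q h => fRaw_rel hα0 hαadd hC h x.2) x.1)
    (by
      rintro ⟨xr, t⟩ ⟨yr, u⟩ ⟨m, hy1, hy2⟩
      simp only at hy1 hy2
      subst hy1; subst hy2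
      obtain ⟨p, rfl⟩ := Quotient.exists_rep xr
      rw [real_mk hα0 hαadd]
      show fRaw hC p t = fRaw hC ((α m).pointMap p) ((fun j => ((m j : ℤ) : ℝ)) + t)
      exact (fRaw_shift hα0 hαadd hC p t m).symm)

theorem gbound_left (hC : IsCrossedProduct Λ α C) (c : C.Mor) (u : Fin (k + l) → ℝ)
    (hu : ∀ i, 0 ≤ u i ∧ u i ≤ (C.deg c i : ℝ)) :
    ∀ i : Fin k, 0 ≤ u (Fin.castAdd l i) ∧
      u (Fin.castAdd l i) ≤ ((Λ.deg (hC.e c).1 i : ℕ) : ℝ) := by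
  intro i
  have h := hu (Fin.castAdd l i)
  have h2 : C.deg c (Fin.castAdd l i) = Λ.deg (hC.e c).1 i := by
    rw [hC.deg_eq]; exact Fin.append_left _ _ i
  rwa [h2] at h

theorem gbound_right (hC : IsCrossedProduct Λ α C) (c : C.Mor) (u : Fin (k + l) → ℝ)
    (hu : ∀ i, 0 ≤ u i ∧ u i ≤ (C.deg c i : ℝ)) :
    ∀ j : Fin l, 0 ≤ u (Fin.natAdd k j) ∧
      u (Fin.natAdd k j) ≤ (((hC.e c).2 j : ℕ) : ℝ) := by
  intro j
  have h := hu (Fin.natAdd k j)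
  have h2 : C.deg c (Fin.natAdd k j) = (hC.e c).2 j := by
    rw [hC.deg_eq]; exact Fin.append_right _ _ j
  rwa [h2] at h

/-- The backward map on raw points. -/
def gRaw (hC : IsCrossedProduct Λ α C) (p : C.Points) : MappingTorusKGraph Λ α :=
  Quot.mk _ (Quotient.mk Λ.ptSetoid ⟨(hC.e p.1).1,
      ⟨fun i => p.2.1 (Fin.castAdd l i), gbound_left hC p.1 p.2.1 p.2.2⟩⟩,
    fun j => p.2.1 (Fin.natAdd k j))

theorem mkpair_congr {a a' : Λ.Mor} {s s' : Fin k → ℝ} {t t' : Fin l → ℝ}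
    (ha : a = a') (hss : s = s') (htt : t = t')
    {h : ∀ i, 0 ≤ s i ∧ s i ≤ (Λ.deg a i : ℝ)}
    {h' : ∀ i, 0 ≤ s' i ∧ s' i ≤ (Λ.deg a' i : ℝ)} :
    (Quot.mk _ (Quotient.mk Λ.ptSetoid ⟨a, ⟨s, h⟩⟩, t) : MappingTorusKGraph Λ α) =
      Quot.mk _ (Quotient.mk Λ.ptSetoid ⟨a', ⟨s', h'⟩⟩, t') := by
  subst ha; subst hss; subst htt; rfl

/-- `gRaw` only depends on the class. -/
theorem gRel (hα0 : α 0 = KGraphHom.id Λ)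
    (hαadd : ∀ m n : Fin l → ℤ, α (m + n) = (α m).comp (α n))
    (hC : IsCrossedProduct Λ α C)
    (p q : C.Points) (h : C.ptRel p q) : gRaw hC p = gRaw hC q := by
  obtain ⟨c, u, hu⟩ := p
  obtain ⟨c', u', hu'⟩ := q
  obtain ⟨h1, h2⟩ := h
  simp only at h1 h2
  rw [segC' hα0 hαadd hC c u hu, segC' hα0 hαadd hC c' u' hu'] at h1
  have hpair := hC.e.symm.injective h1
  rw [Prod.ext_iff] at hpair
  obtain ⟨hmor, hnat⟩ := hpair
  dsimp only at hmor hnat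
  have hfs : KGraph.frac (fun i => u (Fin.castAdd l i)) =
      KGraph.frac (fun i => u' (Fin.castAdd l i)) := by
    funext i; exact congrFun h2 (Fin.castAdd l i)
  have hft : KGraph.frac (fun j => u (Fin.natAdd k j)) =
      KGraph.frac (fun j => u' (Fin.natAdd k j)) := by
    funext j; exact congrFun h2 (Fin.natAdd k j)
  unfold gRaw
  simp only
  -- shift both sides down by the floors of the time coordinates
  have hL := torus_shift (α := α) hα0 hαadd
    (fun j => -(KGraph.fl (fun j' => u (Fin.natAdd k j')) j : ℤ))
    ⟨(hC.e c).1, ⟨fun i => u (Fin.castAdd l i), gbound_left hC c u hu⟩⟩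
    (fun j => u (Fin.natAdd k j))
  have hR := torus_shift (α := α) hα0 hαadd
    (fun j => -(KGraph.fl (fun j' => u' (Fin.natAdd k j')) j : ℤ))
    ⟨(hC.e c').1, ⟨fun i => u' (Fin.castAdd l i), gbound_left hC c' u' hu'⟩⟩
    (fun j => u' (Fin.natAdd k j))
  rw [hL, hR]
  refine congrArg (Quot.mk _) (Prod.ext ?_ ?_)
  · -- the Λ.Real components
    have hA : Λ.seg ((α (fun j => -(KGraph.fl (fun j' => u (Fin.natAdd k j')) j : ℤ))).toFun
          (hC.e c).1)
        (KGraph.fl (fun i => u (Fin.castAdd l i)))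
        (KGraph.ce (fun i => u (Fin.castAdd l i))) =
        Λ.seg ((α (fun j => -(KGraph.fl (fun j' => u' (Fin.natAdd k j')) j : ℤ))).toFun
          (hC.e c').1)
        (KGraph.fl (fun i => u' (Fin.castAdd l i)))
        (KGraph.ce (fun i => u' (Fin.castAdd l i))) := by
      rw [alpha_seg hα0 hαadd, alpha_seg hα0 hαadd, hmor]
    exact Quot.sound ⟨hA, hfs⟩
  · -- the time components
    funext j
    simp only [Pi.add_apply]
    have h3 := congrFun hft j
    simp only [frac_apply] at h3
    push_cast
    simp only [fl_apply] at h3 ⊢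
    push_cast at h3
    linarith [h3]

/-- The backward map `X_C → M(α̃)`. -/
noncomputable def phiBwd (hα0 : α 0 = KGraphHom.id Λ)
    (hαadd : ∀ m n : Fin l → ℤ, α (m + n) = (α m).comp (α n))
    (hC : IsCrossedProduct Λ α C) : C.Real → MappingTorusKGraph Λ α :=
  Quotient.lift (gRaw hC) (gRel hα0 hαadd hC)

end Maps
section Inverses

variable {k l : ℕ} {Λ : KGraph k} {α : (Fin l → ℤ) → KGraphHom Λ Λ}
  {C : KGraph (k + l)}

theorem phi_left_inv (hα0 : α 0 = KGraphHom.id Λ)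
    (hαadd : ∀ m n : Fin l → ℤ, α (m + n) = (α m).comp (α n))
    (hC : IsCrossedProduct Λ α C) (x : MappingTorusKGraph Λ α) :
    phiBwd hα0 hαadd hC (phiFwd hα0 hαadd hC x) = x := by
  induction x using Quot.ind with
  | _ x =>
  obtain ⟨xr, t⟩ := x
  obtain ⟨p, rfl⟩ := Quotient.exists_rep xr
  obtain ⟨a, s, hs⟩ := p
  show phiBwd hα0 hαadd hC (fRaw hC ⟨a, ⟨s, hs⟩⟩ t) = _
  have h1 : phiBwd hα0 hαadd hC (fRaw hC ⟨a, ⟨s, hs⟩⟩ t) =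
      gRaw hC ⟨hC.e.symm ((α (fun j => -⌊t j⌋)).toFun a,
          KGraph.ce (fun j => t j - (⌊t j⌋ : ℝ))),
        ⟨Fin.append s (fun j => t j - (⌊t j⌋ : ℝ)), _⟩⟩ := rfl
  rw [h1]
  unfold gRaw
  have hshift := torus_shift (α := α) hα0 hαadd (fun j => -⌊t j⌋) ⟨a, ⟨s, hs⟩⟩ t
  rw [hshift]
  refine (mkpair_congr ?_ ?_ ?_).symm.trans rfl
  · show (α (fun j => -⌊t j⌋)).toFun a =
      (hC.e (hC.e.symm ((α (fun j => -⌊t j⌋)).toFun a,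
        KGraph.ce (fun j => t j - (⌊t j⌋ : ℝ))))).1
    rw [hC.e.apply_symm_apply]
  · funext i
    show s i = Fin.append s (fun j => t j - (⌊t j⌋ : ℝ)) (Fin.castAdd l i)
    rw [Fin.append_left]
  · funext j
    show ((fun j => ((-⌊t j⌋ : ℤ) : ℝ)) + t) j =
      Fin.append s (fun j => t j - (⌊t j⌋ : ℝ)) (Fin.natAdd k j)
    rw [Fin.append_right]
    simp only [Pi.add_apply]
    push_cast
    ring

theorem phi_right_inv (hα0 : α 0 = KGraphHom.id Λ)
    (hαadd : ∀ m n : Fin l → ℤ, α (m + n) = (α m).comp (α n))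
    (hC : IsCrossedProduct Λ α C) (y : C.Real) :
    phiFwd hα0 hαadd hC (phiBwd hα0 hαadd hC y) = y := by
  induction y using Quotient.ind with
  | _ p =>
  obtain ⟨c, u, hu⟩ := p
  show phiFwd hα0 hαadd hC (gRaw hC ⟨c, ⟨u, hu⟩⟩) = _
  have h1 : phiFwd hα0 hαadd hC (gRaw hC ⟨c, ⟨u, hu⟩⟩) =
      fRaw hC ⟨(hC.e c).1, ⟨fun i => u (Fin.castAdd l i), gbound_left hC c u hu⟩⟩
        (fun j => u (Fin.natAdd k j)) := rfl
  rw [h1]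
  have hz0 : ∀ j : Fin l, 0 ≤ (fun j => u (Fin.natAdd k j)) j - (((0 : Fin l → ℤ) j : ℤ) : ℝ) := by
    intro j
    simp only [Pi.zero_apply, Int.cast_zero, sub_zero]
    exact (gbound_right hC c u hu j).1
  have hzn : ∀ j : Fin l, (fun j => u (Fin.natAdd k j)) j - (((0 : Fin l → ℤ) j : ℤ) : ℝ) ≤
      (((hC.e c).2 j : ℕ) : ℝ) := by
    intro j
    simp only [Pi.zero_apply, Int.cast_zero, sub_zero]
    exact (gbound_right hC c u hu j).2
  rw [fRaw_eq hα0 hαadd hC _ _ _ _ 0 (hC.e c).2 hz0 hzn]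
  show C.pt _ _ _ = Quotient.mk C.ptSetoid ⟨c, ⟨u, hu⟩⟩
  refine (KGraph.pt_congr C ?_ ?_).trans rfl
  · show hC.e.symm ((α (-0)).toFun (hC.e c).1, (hC.e c).2) = c
    rw [neg_zero, alpha_zero_apply hα0, Prod.mk.eta, hC.e.symm_apply_apply]
  · funext i
    refine Fin.addCases (fun i => ?_) (fun j => ?_) i
    · rw [Fin.append_left]
    · rw [Fin.append_right]
      simp
end Inverses
section BwdCont

variable {k l : ℕ} {Λ : KGraph k} {α : (Fin l → ℤ) → KGraphHom Λ Λ}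
  {C : KGraph (k + l)}

theorem gRaw_continuous (hC : IsCrossedProduct Λ α C) : Continuous (gRaw hC) := by
  have h : ∀ c : C.Mor, Continuous fun w : { t : Fin (k + l) → ℝ //
      ∀ i, 0 ≤ t i ∧ t i ≤ (C.deg c i : ℝ) } => gRaw hC ⟨c, w⟩ := by
    intro c
    have hval : Continuous fun w : { t : Fin (k + l) → ℝ //
        ∀ i, 0 ≤ t i ∧ t i ≤ (C.deg c i : ℝ) } => fun i : Fin k => w.1 (Fin.castAdd l i) :=
      continuous_pi fun i => (continuous_apply _).comp continuous_subtype_val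
    have hsub : Continuous fun w : { t : Fin (k + l) → ℝ //
        ∀ i, 0 ≤ t i ∧ t i ≤ (C.deg c i : ℝ) } =>
        (⟨fun i => w.1 (Fin.castAdd l i), gbound_left hC c w.1 w.2⟩ :
          { t : Fin k → ℝ // ∀ i, 0 ≤ t i ∧ t i ≤ (Λ.deg (hC.e c).1 i : ℝ) }) :=
      hval.subtype_mk _
    have hsig : Continuous fun w : { t : Fin (k + l) → ℝ //
        ∀ i, 0 ≤ t i ∧ t i ≤ (C.deg c i : ℝ) } =>
        (⟨(hC.e c).1, ⟨fun i => w.1 (Fin.castAdd l i), gbound_left hC c w.1 w.2⟩⟩ :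
          Λ.Points) :=
      Continuous.comp (continuous_sigmaMk
        (σ := fun a : Λ.Mor => { t : Fin k → ℝ // ∀ i, 0 ≤ t i ∧ t i ≤ (Λ.deg a i : ℝ) })
        (i := (hC.e c).1)) hsub
    have hq : Continuous fun w : { t : Fin (k + l) → ℝ //
        ∀ i, 0 ≤ t i ∧ t i ≤ (C.deg c i : ℝ) } =>
        Quotient.mk Λ.ptSetoid
          ⟨(hC.e c).1, ⟨fun i => w.1 (Fin.castAdd l i), gbound_left hC c w.1 w.2⟩⟩ :=
      Continuous.comp continuous_quot_mk hsig
    have htime : Continuous fun w : { t : Fin (k + l) → ℝ //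
        ∀ i, 0 ≤ t i ∧ t i ≤ (C.deg c i : ℝ) } => fun j : Fin l => w.1 (Fin.natAdd k j) :=
      continuous_pi fun j => (continuous_apply _).comp continuous_subtype_val
    exact Continuous.comp continuous_quot_mk (hq.prodMk htime)
  exact continuous_sigma h

theorem phiBwd_continuous (hα0 : α 0 = KGraphHom.id Λ)
    (hαadd : ∀ m n : Fin l → ℤ, α (m + n) = (α m).comp (α n))
    (hC : IsCrossedProduct Λ α C) : Continuous (phiBwd hα0 hαadd hC) := by
  unfold phiBwd
  exact continuous_quot_lift _ (gRaw_continuous hC)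

end BwdCont
section FwdCont

variable {k l : ℕ} {Λ : KGraph k} {α : (Fin l → ℤ) → KGraphHom Λ Λ}
  {C : KGraph (k + l)}

/-- The fixed-cell, clamped version of the forward map, which is globally
continuous. -/
noncomputable def cellMap (hC : IsCrossedProduct Λ α C) (a : Λ.Mor) (z : Fin l → ℤ) :
    ({ t : Fin k → ℝ // ∀ i, 0 ≤ t i ∧ t i ≤ (Λ.deg a i : ℝ) } × (Fin l → ℝ)) → C.Real :=
  fun w =>
    C.pt (hC.e.symm ((α (-z)).toFun a, 1))
      (Fin.append w.1.1 (fun j => max 0 (min (w.2 j - (z j : ℝ)) 1)))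
      (pt_bound hC
        (fun i => by rw [(α (-z)).map_deg]; exact w.1.2 i)
        (fun j => ⟨le_max_left _ _, by
          simp only [Pi.one_apply, Nat.cast_one]
          exact max_le (by norm_num) (min_le_right _ _)⟩))

theorem cellMap_continuous (hC : IsCrossedProduct Λ α C) (a : Λ.Mor) (z : Fin l → ℤ) :
    Continuous (cellMap hC a z) := by
  unfold cellMap KGraph.pt
  refine Continuous.comp continuous_quot_mk ?_
  refine Continuous.comp (continuous_sigmaMk
    (σ := fun c : C.Mor => { t : Fin (k + l) → ℝ //
      ∀ i, 0 ≤ t i ∧ t i ≤ (C.deg c i : ℝ) })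
    (i := hC.e.symm ((α (-z)).toFun a, 1))) ?_
  refine Continuous.subtype_mk ?_ _
  refine continuous_pi fun i => ?_
  refine Fin.addCases (motive := fun i => Continuous fun w :
      ({ t : Fin k → ℝ // ∀ i, 0 ≤ t i ∧ t i ≤ (Λ.deg a i : ℝ) } × (Fin l → ℝ)) =>
      Fin.append w.1.1 (fun j => max 0 (min (w.2 j - (z j : ℝ)) 1)) i)
    (fun i => ?_) (fun j => ?_) i
  · simp only [Fin.append_left]
    exact (continuous_apply i).comp (continuous_subtype_val.comp continuous_fst)
  · simp only [Fin.append_right]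
    refine Continuous.max continuous_const ?_
    refine Continuous.min ?_ continuous_const
    exact ((continuous_apply j).comp continuous_snd).sub continuous_const

/-- On the cell `z ≤ t ≤ z+1`, `fRaw` agrees with the cell map. -/
theorem fRaw_eq_cellMap (hα0 : α 0 = KGraphHom.id Λ)
    (hαadd : ∀ m n : Fin l → ℤ, α (m + n) = (α m).comp (α n))
    (hC : IsCrossedProduct Λ α C) (a : Λ.Mor) (z : Fin l → ℤ)
    (w : { t : Fin k → ℝ // ∀ i, 0 ≤ t i ∧ t i ≤ (Λ.deg a i : ℝ) } × (Fin l → ℝ))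
    (hw : ∀ j, (z j : ℝ) ≤ w.2 j ∧ w.2 j ≤ (z j : ℝ) + 1) :
    fRaw hC ⟨a, w.1⟩ w.2 = cellMap hC a z w := by
  have hz0 : ∀ j, 0 ≤ w.2 j - (z j : ℝ) := fun j => by linarith [(hw j).1]
  have hzn : ∀ j, w.2 j - (z j : ℝ) ≤ (((1 : Fin l → ℕ) j : ℕ) : ℝ) := fun j => by
    simp only [Pi.one_apply, Nat.cast_one]
    linarith [(hw j).2]
  have h1 := fRaw_eq hα0 hαadd hC a w.1.1 w.1.2 w.2 z 1 hz0 hzn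
  rw [h1]
  refine KGraph.pt_congr C rfl ?_
  refine congrArg (Fin.append w.1.1) ?_
  funext j
  have h2 := hz0 j
  have h3 : w.2 j - (z j : ℝ) ≤ 1 := by linarith [(hw j).2]
  rw [min_eq_left h3, max_eq_right h2]

/-- The cells, as subsets of a slice. -/
def cellSet (a : Λ.Mor) (z : Fin l → ℤ) :
    Set ({ t : Fin k → ℝ // ∀ i, 0 ≤ t i ∧ t i ≤ ((KGraph.deg Λ a) i : ℝ) } × (Fin l → ℝ)) :=
  { w | ∀ j, (z j : ℝ) ≤ w.2 j ∧ w.2 j ≤ (z j : ℝ) + 1 }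

theorem cellSet_closed (a : Λ.Mor) (z : Fin l → ℤ) : IsClosed (cellSet (Λ := Λ) a z) := by
  have : cellSet (Λ := Λ) a z =
      ⋂ j, ({ w : { t : Fin k → ℝ // ∀ i, 0 ≤ t i ∧ t i ≤ ((KGraph.deg Λ a) i : ℝ) } ×
        (Fin l → ℝ) | (z j : ℝ) ≤ w.2 j } ∩ { w | w.2 j ≤ (z j : ℝ) + 1 }) := by
    ext w
    simp [cellSet, Set.mem_iInter, forall_and]
  rw [this]
  refine isClosed_iInter fun j => IsClosed.inter ?_ ?_
  · exact isClosed_le continuous_const ((continuous_apply j).comp continuous_snd)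
  · exact isClosed_le ((continuous_apply j).comp continuous_snd) continuous_const

theorem cellSet_cover (a : Λ.Mor) : (⋃ z : Fin l → ℤ, cellSet (Λ := Λ) a z) = Set.univ := by
  refine Set.eq_univ_of_forall fun w => ?_
  refine Set.mem_iUnion.mpr ⟨fun j => ⌊w.2 j⌋, fun j => ?_⟩
  exact ⟨Int.floor_le _, (Int.lt_floor_add_one _).le⟩

theorem cellSet_lf (a : Λ.Mor) : LocallyFinite (cellSet (k := k) (l := l) (Λ := Λ) a) := by
  intro w
  refine ⟨{ v | ∀ j, |v.2 j - w.2 j| < 1 }, ?_, ?_⟩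
  · have hopen : IsOpen { v : { t : Fin k → ℝ // ∀ i, 0 ≤ t i ∧ t i ≤ ((KGraph.deg Λ a) i : ℝ) } ×
        (Fin l → ℝ) | ∀ j, |v.2 j - w.2 j| < 1 } := by
      have : { v : { t : Fin k → ℝ // ∀ i, 0 ≤ t i ∧ t i ≤ ((KGraph.deg Λ a) i : ℝ) } ×
          (Fin l → ℝ) | ∀ j, |v.2 j - w.2 j| < 1 } =
          ⋂ j, { v | |v.2 j - w.2 j| < 1 } := by
        ext v; simp [Set.mem_iInter]
      rw [this]
      refine isOpen_iInter_of_finite fun j => ?_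
      exact isOpen_lt (Continuous.abs (((continuous_apply j).comp continuous_snd).sub
        continuous_const)) continuous_const
    exact hopen.mem_nhds (fun j => by simp)
  · refine Set.Finite.subset (Set.finite_Icc (fun j => ⌊w.2 j⌋ - 2) (fun j => ⌊w.2 j⌋ + 2)) ?_
    rintro z ⟨v, hv1, hv2⟩
    rw [Set.mem_Icc]
    constructor <;> rw [Pi.le_def] <;> intro j
    · have h1 := (hv1 j).2
      have h2 := hv2 j
      have h3 : w.2 j < (z j : ℝ) + 2 := by
        have := abs_lt.mp h2
        linarith
      have h4 : (⌊w.2 j⌋ : ℝ) ≤ w.2 j := Int.floor_le _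
      have h5 : (⌊w.2 j⌋ : ℤ) < z j + 2 := by
        have : ((⌊w.2 j⌋ : ℤ) : ℝ) < ((z j + 2 : ℤ) : ℝ) := by push_cast; linarith
        exact_mod_cast this
      omega
    · have h1 := (hv1 j).1
      have h2 := hv2 j
      have h3 : (z j : ℝ) < w.2 j + 1 := by
        have := abs_lt.mp h2
        linarith
      have h4 : w.2 j < (⌊w.2 j⌋ : ℝ) + 1 := Int.lt_floor_add_one _
      have h5 : (z j : ℤ) < ⌊w.2 j⌋ + 2 := by
        have : ((z j : ℤ) : ℝ) < ((⌊w.2 j⌋ + 2 : ℤ) : ℝ) := by push_cast; linarith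
        exact_mod_cast this
      omega

/-- Continuity of the forward map on raw data. -/
theorem fRaw_continuous (hα0 : α 0 = KGraphHom.id Λ)
    (hαadd : ∀ m n : Fin l → ℤ, α (m + n) = (α m).comp (α n))
    (hC : IsCrossedProduct Λ α C) :
    Continuous fun q : Λ.Points × (Fin l → ℝ) => fRaw hC q.1 q.2 := by
  -- reduce to slices via the sigma-product distribution homeomorphism
  have hslice : ∀ a : Λ.Mor, Continuous fun w :
      ({ t : Fin k → ℝ // ∀ i, 0 ≤ t i ∧ t i ≤ (Λ.deg a i : ℝ) } × (Fin l → ℝ)) =>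
      fRaw hC ⟨a, w.1⟩ w.2 := by
    intro a
    refine (cellSet_lf (Λ := Λ) a).continuous (cellSet_cover a) (cellSet_closed a)
      fun z => ?_
    refine ContinuousOn.congr ((cellMap_continuous hC a z).continuousOn) ?_
    intro w hw
    exact fRaw_eq_cellMap hα0 hαadd hC a z w hw
  have hF' : Continuous fun w : (Σ a : Λ.Mor,
      ({ t : Fin k → ℝ // ∀ i, 0 ≤ t i ∧ t i ≤ (Λ.deg a i : ℝ) } × (Fin l → ℝ))) =>
      fRaw hC ⟨w.1, w.2.1⟩ w.2.2 :=
    continuous_sigma fun a => hslice a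
  have heq : (fun q : Λ.Points × (Fin l → ℝ) => fRaw hC q.1 q.2) =
      (fun w : (Σ a : Λ.Mor,
          ({ t : Fin k → ℝ // ∀ i, 0 ≤ t i ∧ t i ≤ (Λ.deg a i : ℝ) } × (Fin l → ℝ))) =>
        fRaw hC ⟨w.1, w.2.1⟩ w.2.2) ∘
      (Homeomorph.sigmaProdDistrib
        (X := fun a : Λ.Mor => { t : Fin k → ℝ // ∀ i, 0 ≤ t i ∧ t i ≤ (Λ.deg a i : ℝ) })
        (Y := Fin l → ℝ)) := by
    funext q
    obtain ⟨⟨a, u⟩, t⟩ := q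
    simp only [Function.comp_apply, Homeomorph.sigmaProdDistrib_apply]
    rfl
  rw [heq]
  exact hF'.comp (Homeomorph.continuous _)

end FwdCont
section Final

variable {k l : ℕ} {Λ : KGraph k} {α : (Fin l → ℤ) → KGraphHom Λ Λ}
  {C : KGraph (k + l)}

theorem phiFwd_continuous (hα0 : α 0 = KGraphHom.id Λ)
    (hαadd : ∀ m n : Fin l → ℤ, α (m + n) = (α m).comp (α n))
    (hC : IsCrossedProduct Λ α C) : Continuous (phiFwd hα0 hαadd hC) := by
  unfold phiFwd
  refine continuous_quot_lift _ ?_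
  have hq : Topology.IsQuotientMap (fun p : Λ.Points => Quotient.mk Λ.ptSetoid p) :=
    isQuotientMap_quot_mk
  refine hq.continuous_lift_prod_left ?_
  exact fRaw_continuous hα0 hαadd hC

end Final

/-- Let `α` be an action of `ℤˡ` on a `k`-graph `Λ`, with
induced action `α̃` on `X_Λ` (`α̃_m = (α_m)~`, i.e. `α̃_m([λ,t]) = [α_m(λ),t]`),
and let `C = Λ ×_α ℤˡ` be the crossed-product `(k+l)`-graph.  Then there is a
homeomorphism `φ : M(α̃) ≃ₜ X_{Λ ×_α ℤˡ}` with
`φ([[λ,s],t]) = [(λ,⌈t⌉),(s,t)]` whenever `t ≥ 0`, identifying `ℝ^{k+l}` with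
`ℝᵏ × ℝˡ`. -/
theorem crossed_product_realization_is_mapping_torus
    (Λ : KGraph k) (α : (Fin l → ℤ) → KGraphHom Λ Λ)
    (hα0 : α 0 = KGraphHom.id Λ)
    (hαadd : ∀ m n : Fin l → ℤ, α (m + n) = (α m).comp (α n))
    (C : KGraph (k + l)) (hC : IsCrossedProduct Λ α C) :
    ∃ φ : MappingTorusKGraph Λ α ≃ₜ C.Real,
      ∀ (lam : Λ.Mor) (s : Fin k → ℝ)
        (hs : ∀ i, 0 ≤ s i ∧ s i ≤ (Λ.deg lam i : ℝ))
        (t : Fin l → ℝ) (ht : ∀ j, 0 ≤ t j)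
        (hb : ∀ i, 0 ≤ Fin.append s t i ∧
          Fin.append s t i ≤ (C.deg (hC.e.symm (lam, KGraph.ce t)) i : ℝ)),
        φ (Quot.mk _ (Λ.pt lam s hs, t)) =
          C.pt (hC.e.symm (lam, KGraph.ce t)) (Fin.append s t) hb := by
  refine ⟨⟨⟨phiFwd hα0 hαadd hC, phiBwd hα0 hαadd hC,
    phi_left_inv hα0 hαadd hC, phi_right_inv hα0 hαadd hC⟩,
    phiFwd_continuous hα0 hαadd hC, phiBwd_continuous hα0 hαadd hC⟩, ?_⟩
  intro lam s hs t ht hb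
  show phiFwd hα0 hαadd hC (Quot.mk _ (Λ.pt lam s hs, t)) = _
  have h1 : phiFwd hα0 hαadd hC (Quot.mk _ (Λ.pt lam s hs, t)) =
      fRaw hC ⟨lam, ⟨s, hs⟩⟩ t := rfl
  rw [h1]
  have hz0 : ∀ j, 0 ≤ t j - (((0 : Fin l → ℤ) j : ℤ) : ℝ) := fun j => by
    simpa using ht j
  have hzn : ∀ j, t j - (((0 : Fin l → ℤ) j : ℤ) : ℝ) ≤ ((KGraph.ce t j : ℕ) : ℝ) :=
    fun j => by simpa using le_ceil_toNat
  rw [fRaw_eq hα0 hαadd hC lam s hs t 0 (KGraph.ce t) hz0 hzn]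
  refine KGraph.pt_congr C ?_ ?_
  · rw [neg_zero, alpha_zero_apply hα0]
  · refine congrArg (Fin.append s) ?_
    funext j
    simp

end CrossedProduct
end
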